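/- arXiv:2310.18043 — 7 statements merged into one kernel-verified Lean document; each statement's English description precedes it below -/
import Mathlib

section
/- Let k be a positive integer, c ∈ ℂ, r > 0, and let σ_1, …, σ_k ∈ ℂ be the k roots of z^k = -1, so that p_i = c + r·σ_i are the k trapezoidal-quadrature poles on the circle of center c and radius r. Then for every z ∈ ℂ with z ≠ p_i for all i, (1/k) · Σ_{i=1}^k (p_i − c)/(p_i − z) = 1/(1 + ((z − c)/r)^k). -/
open Polynomial Finset

lemma derivative_finset_prod' {ι : Type*} [DecidableEq ι] (s : Finset ι) (f : ι → Polynomial ℂ) :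
    Polynomial.derivative (∏ i ∈ s, f i)
      = ∑ i ∈ s, (∏ j ∈ s.erase i, f j) * Polynomial.derivative (f i) := by
  induction s using Finset.induction with
  | empty => simp
  | @insert a s ha ih =>
    have key : ∀ i ∈ s, f a * ((∏ j ∈ s.erase i, f j) * Polynomial.derivative (f i))
        = (∏ j ∈ (insert a s).erase i, f j) * Polynomial.derivative (f i) := by
      intro i hi
      rw [Finset.erase_insert_of_ne (fun h => ha (by rw [h]; exact hi)),
        Finset.prod_insert (fun h => ha (Finset.mem_of_mem_erase h)), mul_assoc]
    rw [Finset.prod_insert ha, derivative_mul, ih, Finset.mul_sum, Finset.sum_congr rfl key,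
      Finset.sum_insert ha, Finset.erase_insert ha]
    ring

lemma prod_X_sub_sigma {k : ℕ} (hk : 0 < k) (σ : Fin k → ℂ)
    (hinj : Function.Injective σ) (hroot : ∀ i, σ i ^ k = -1) :
    (∏ i, (X - C (σ i))) = X ^ k + C 1 := by
  have hPm : (∏ i, (X - C (σ i))).Monic := monic_prod_of_monic _ _ fun i _ => monic_X_sub_C _
  have hQm : (X ^ k + C (1 : ℂ)).Monic := by
    apply monic_X_pow_add
    simpa using hk
  have hPdeg : (∏ i, (X - C (σ i))).natDegree = k := by
    rw [natDegree_prod _ _ (fun i _ => X_sub_C_ne_zero (σ i))]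
    simp
  have hQdeg : (X ^ k + C (1 : ℂ)).natDegree = k := natDegree_X_pow_add_C
  set Q : ℂ[X] := (∏ i, (X - C (σ i))) - (X ^ k + C 1) with hQdef
  have heval : ∀ i, Q.eval (σ i) = 0 := by
    intro i
    have h1 : (∏ j, (X - C (σ j))).eval (σ i) = 0 := by
      rw [eval_prod]
      exact Finset.prod_eq_zero (Finset.mem_univ i) (by simp)
    simp [hQdef, h1, hroot i]
  by_cases hQ0 : Q = 0
  · rw [hQdef, sub_eq_zero] at hQ0
    exact hQ0
  · exfalso
    have hdeg : Q.degree < (k : ℕ) := by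
      have h := degree_sub_lt
        (p := ∏ i, (X - C (σ i))) (q := X ^ k + C 1)
        (by rw [degree_eq_natDegree hPm.ne_zero, degree_eq_natDegree hQm.ne_zero, hPdeg, hQdeg])
        hPm.ne_zero (by rw [hPm.leadingCoeff, hQm.leadingCoeff])
      rw [degree_eq_natDegree hPm.ne_zero, hPdeg] at h
      exact h
    have hnd : Q.natDegree < k := by
      rwa [← natDegree_lt_iff_degree_lt hQ0] at hdeg
    exact hQ0 (eq_zero_of_natDegree_lt_card_of_eval_eq_zero Q hinj heval (by simpa using hnd))

lemma trapezoidal_aux {k : ℕ} (hk : 0 < k) (σ : Fin k → ℂ)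
    (hinj : Function.Injective σ) (hroot : ∀ i, σ i ^ k = -1)
    (w : ℂ) (hwne : ∀ i, w - σ i ≠ 0) :
    (1 / (k : ℂ)) * ∑ i, σ i / (σ i - w) = 1 / (1 + w ^ k) := by
  have hPpoly := prod_X_sub_sigma hk σ hinj hroot
  have hP : ∀ x : ℂ, ∏ i, (x - σ i) = x ^ k + 1 := by
    intro x
    have := congrArg (Polynomial.eval x) hPpoly
    simpa [eval_prod] using this
  have hden : w ^ k + 1 ≠ 0 := by
    rw [← hP w]
    exact Finset.prod_ne_zero_iff.mpr fun i _ => hwne i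
  have hderiv : ∑ i, ∏ j ∈ Finset.univ.erase i, (w - σ j) = k * w ^ (k - 1) := by
    have h1 := congrArg (fun q => Polynomial.eval w (Polynomial.derivative q)) hPpoly
    simp only [derivative_finset_prod', derivative_sub, derivative_X, derivative_C, sub_zero,
      mul_one, derivative_add, derivative_X_pow, eval_add, eval_mul, eval_natCast, eval_pow,
      eval_X, eval_finset_sum, eval_prod, eval_sub, eval_C, add_zero] at h1
    simpa using h1
  have hterm : ∀ i, σ i / (σ i - w)
      = 1 - w * (∏ j ∈ Finset.univ.erase i, (w - σ j)) / (w ^ k + 1) := by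
    intro i
    have hprod_i : (w - σ i) * ∏ j ∈ Finset.univ.erase i, (w - σ j) = w ^ k + 1 := by
      rw [Finset.mul_prod_erase Finset.univ (fun j => w - σ j) (Finset.mem_univ i)]
      exact hP w
    have hsw : σ i - w ≠ 0 := sub_ne_zero.mpr (Ne.symm (sub_ne_zero.mp (hwne i)))
    have hprodval : ∏ j ∈ Finset.univ.erase i, (w - σ j) = (w ^ k + 1) / (w - σ i) := by
      rw [eq_div_iff (hwne i)]
      linear_combination hprod_i
    have key : σ i / (σ i - w) = 1 - w / (w - σ i) := by
      rw [eq_sub_iff_add_eq, div_add_div _ _ hsw (hwne i), div_eq_one_iff_eq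
        (mul_ne_zero hsw (hwne i))]
      ring
    rw [hprodval, key]
    congr 1
    rw [mul_div_assoc, div_right_comm, div_self hden, mul_one_div]
  rw [Finset.sum_congr rfl fun i _ => hterm i]
  rw [Finset.sum_sub_distrib, Finset.sum_const, ← Finset.sum_div, ← Finset.mul_sum, hderiv]
  have hk0 : (k : ℂ) ≠ 0 := by exact_mod_cast hk.ne'
  have hwk : w * (↑k * w ^ (k - 1)) = (k : ℂ) * w ^ k := by
    have h : w * w ^ (k - 1) = w ^ k := by rw [← pow_succ', Nat.sub_add_cancel hk]
    rw [← h]; ring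
  rw [hwk]
  simp only [Finset.card_univ, Fintype.card_fin, nsmul_eq_mul, mul_one]
  have hden' : 1 + w ^ k ≠ 0 := by rwa [add_comm]
  field_simp
  ring

/-- For center `c`, radius `r > 0`, and the `k` roots `σ i` of `z^k = -1`,
the trapezoidal-quadrature poles are `p i = c + r σ i`, and for every `z` distinct from
all poles, `(1/k) ⬝ Σ (p i − c)/(p i − z) = 1 / (1 + ((z − c)/r)^k)`. -/
theorem trapezoidal_compact_form_general (k : ℕ) (hk : 0 < k) (c : ℂ) (r : ℝ) (hr : 0 < r)
    (σ : Fin k → ℂ) (hinj : Function.Injective σ) (hroot : ∀ i, σ i ^ k = -1)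
    (p : Fin k → ℂ) (hp : ∀ i, p i = c + (r : ℂ) * σ i)
    (z : ℂ) (hz : ∀ i, z ≠ p i) :
    (1 / (k : ℂ)) * ∑ i, (p i - c) / (p i - z) = 1 / (1 + ((z - c) / (r : ℂ)) ^ k) := by
  have hr0 : (r : ℂ) ≠ 0 := by exact_mod_cast hr.ne'
  have hwne : ∀ i, (z - c) / (r : ℂ) - σ i ≠ 0 := by
    intro i h
    apply hz i
    rw [hp i]
    have h2 : (z - c) / (r : ℂ) = σ i := sub_eq_zero.mp h
    have h3 : z - c = (r : ℂ) * σ i := by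
      rw [← h2]; field_simp
    linear_combination h3
  have hterm : ∀ i, (p i - c) / (p i - z) = σ i / (σ i - (z - c) / (r : ℂ)) := by
    intro i
    have h1 : p i - c = (r : ℂ) * σ i := by rw [hp i]; ring
    have h2 : p i - z = (r : ℂ) * (σ i - (z - c) / (r : ℂ)) := by
      rw [hp i]; field_simp; ring
    rw [h1, h2, mul_div_mul_left _ _ hr0]
  rw [Finset.sum_congr rfl fun i _ => hterm i]
  exact trapezoidal_aux hk σ hinj hroot _ hwne
end

section
/- Let 0 < ℓ < 1 and let S = {z ∈ ℂ : |z − (1+ℓ)/2| ≤ (1−ℓ)/2}, and −S = {−z : z ∈ S}. Let k be a positive integer and define r(z) = ((z − √ℓ)/(z + √ℓ))^k. Then sup_{z ∈ S} |r(z)| = ((1−√ℓ)/(1+√ℓ))^k, inf_{z ∈ −S} |r(z)| = ((1+√ℓ)/(1−√ℓ))^k, and hence the separation ratio of r between S and −S equals ((1+√ℓ)/(1−√ℓ))^{−2k}. -/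
private lemma ofReal_norm_eq_coe_nnnorm {E : Type*} [SeminormedAddCommGroup E] (x : E) :
    ENNReal.ofReal ‖x‖ = (‖x‖₊ : ENNReal) := ofReal_norm x

private lemma abs_key (ℓ : ℝ) (hℓ0 : 0 < ℓ) (hℓ1 : ℓ < 1) (z : ℂ)
    (hz : ‖z - (((1 + ℓ) / 2 : ℝ) : ℂ)‖ ≤ (1 - ℓ) / 2) :
    (1 + Real.sqrt ℓ) * ‖z - ((Real.sqrt ℓ : ℝ) : ℂ)‖ ≤
      (1 - Real.sqrt ℓ) * ‖z + ((Real.sqrt ℓ : ℝ) : ℂ)‖ := by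
  set a := Real.sqrt ℓ with ha
  have ha2 : a ^ 2 = ℓ := Real.sq_sqrt hℓ0.le
  have ha0 : 0 < a := Real.sqrt_pos.2 hℓ0
  have ha1 : a < 1 := by nlinarith
  have hz2 := pow_le_pow_left₀ (norm_nonneg _) hz 2
  rw [Complex.sq_norm, Complex.normSq_apply] at hz2
  simp only [Complex.sub_re, Complex.sub_im, Complex.ofReal_re, Complex.ofReal_im] at hz2
  rw [← pow_le_pow_iff_left₀ (by positivity) (mul_nonneg (by linarith) (norm_nonneg _)) two_ne_zero,
    mul_pow, mul_pow, Complex.sq_norm, Complex.sq_norm, Complex.normSq_apply, Complex.normSq_apply]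
  simp only [Complex.sub_re, Complex.sub_im, Complex.add_re, Complex.add_im,
    Complex.ofReal_re, Complex.ofReal_im]
  nlinarith [mul_le_mul_of_nonneg_left hz2 ha0.le, sq_nonneg z.im]

private lemma re_ge (ℓ : ℝ) (z : ℂ)
    (hz : ‖z - (((1 + ℓ) / 2 : ℝ) : ℂ)‖ ≤ (1 - ℓ) / 2) : ℓ ≤ z.re := by
  have h1 : |(z - (((1 + ℓ) / 2 : ℝ) : ℂ)).re| ≤ (1 - ℓ) / 2 :=
    (Complex.abs_re_le_norm _).trans hz
  simp only [Complex.sub_re, Complex.ofReal_re] at h1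
  have := abs_le.mp h1
  linarith [this.1]

/-- For `0 < ℓ < 1`, `S` the closed disk `{z : |z − (1+ℓ)/2| ≤ (1−ℓ)/2}`
and `−S` its reflection through the origin, the Zolotarev function
`r(z) = ((z − √ℓ)/(z + √ℓ))^k` (with `|r(z)|` interpreted in `[0,∞]` as
`‖(z−√ℓ)^k‖ / ‖(z+√ℓ)^k‖` so poles give `∞`) satisfies
`sup_{z∈S} |r(z)| = ((1−√ℓ)/(1+√ℓ))^k`, `inf_{z∈−S} |r(z)| = ((1+√ℓ)/(1−√ℓ))^k`,
hence the separation ratio equals `((1+√ℓ)/(1−√ℓ))^{−2k}`. -/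
theorem zolotarev_function_separation (ℓ : ℝ) (hℓ0 : 0 < ℓ) (hℓ1 : ℓ < 1) (k : ℕ) (hk : 0 < k)
    (S : Set ℂ)
    (hS : S = {z : ℂ | ‖z - (((1 + ℓ) / 2 : ℝ) : ℂ)‖ ≤ (1 - ℓ) / 2})
    (f : ℂ → ENNReal)
    (hf : f = fun z =>
      (‖(z - ((Real.sqrt ℓ : ℝ) : ℂ)) ^ k‖₊ : ENNReal) /
        (‖(z + ((Real.sqrt ℓ : ℝ) : ℂ)) ^ k‖₊ : ENNReal)) :
    (⨆ z ∈ S, f z) = ENNReal.ofReal (((1 - Real.sqrt ℓ) / (1 + Real.sqrt ℓ)) ^ k) ∧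
    (⨅ z ∈ (fun w : ℂ => -w) ⁻¹' S, f z) =
      ENNReal.ofReal (((1 + Real.sqrt ℓ) / (1 - Real.sqrt ℓ)) ^ k) ∧
    (⨆ z ∈ S, f z) / (⨅ z ∈ (fun w : ℂ => -w) ⁻¹' S, f z) =
      ENNReal.ofReal (((1 + Real.sqrt ℓ) / (1 - Real.sqrt ℓ)) ^ (-(2 * (k : ℤ)))) := by
  set a := Real.sqrt ℓ with ha
  have ha2 : a ^ 2 = ℓ := Real.sq_sqrt hℓ0.le
  have ha0 : 0 < a := Real.sqrt_pos.2 hℓ0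
  have ha1 : a < 1 := by nlinarith
  -- value at 1
  have h1m : (1 : ℂ) - ((a : ℝ) : ℂ) = (((1 - a : ℝ)) : ℂ) := by push_cast; ring
  have h1p : (1 : ℂ) + ((a : ℝ) : ℂ) = (((1 + a : ℝ)) : ℂ) := by push_cast; ring
  have hn1m : (-1 : ℂ) - ((a : ℝ) : ℂ) = (((-(1 + a) : ℝ)) : ℂ) := by push_cast; ring
  have hn1p : (-1 : ℂ) + ((a : ℝ) : ℂ) = (((-(1 - a) : ℝ)) : ℂ) := by push_cast; ring
  have hf1 : f 1 = ENNReal.ofReal (((1 - a) / (1 + a)) ^ k) := by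
    rw [hf]
    simp only [h1m, h1p, ← Complex.ofReal_pow, ← ofReal_norm_eq_coe_nnnorm,
      Complex.norm_real, Real.norm_eq_abs, abs_pow]
    rw [abs_of_nonneg (by linarith : (0:ℝ) ≤ 1 - a), abs_of_nonneg (by linarith : (0:ℝ) ≤ 1 + a),
      ← ENNReal.ofReal_div_of_pos (pow_pos (by linarith) k), div_pow]
  have hfn1 : f (-1) = ENNReal.ofReal (((1 + a) / (1 - a)) ^ k) := by
    rw [hf]
    simp only [hn1m, hn1p, ← Complex.ofReal_pow, ← ofReal_norm_eq_coe_nnnorm,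
      Complex.norm_real, Real.norm_eq_abs, abs_pow, abs_neg]
    rw [abs_of_nonneg (by linarith : (0:ℝ) ≤ 1 + a), abs_of_nonneg (by linarith : (0:ℝ) ≤ 1 - a),
      ← ENNReal.ofReal_div_of_pos (pow_pos (by linarith) k), div_pow]
  have h1S : (1 : ℂ) ∈ S := by
    rw [hS]
    simp only [Set.mem_setOf_eq]
    have : (1 : ℂ) - (((1 + ℓ) / 2 : ℝ) : ℂ) = (((1 - ℓ) / 2 : ℝ) : ℂ) := by push_cast; ring
    rw [this, Complex.norm_real, Real.norm_eq_abs, abs_of_nonneg (by linarith)]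
  have hn1S : (-1 : ℂ) ∈ (fun w : ℂ => -w) ⁻¹' S := by
    simp only [Set.mem_preimage, neg_neg]; exact h1S
  -- sup
  have hsup : (⨆ z ∈ S, f z) = ENNReal.ofReal (((1 - a) / (1 + a)) ^ k) := by
    apply le_antisymm
    · refine iSup₂_le fun z hz => ?_
      rw [hS] at hz
      simp only [Set.mem_setOf_eq] at hz
      have hre : ℓ ≤ z.re := re_ge ℓ z hz
      have hzp : z + ((a : ℝ) : ℂ) ≠ 0 := by
        intro h
        have : (z + ((a : ℝ) : ℂ)).re = 0 := by rw [h]; simp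
        simp only [Complex.add_re, Complex.ofReal_re] at this
        linarith
      rw [hf]
      simp only
      rw [ENNReal.div_le_iff (by simp [pow_ne_zero, hzp]) (by simp)]
      rw [← ofReal_norm_eq_coe_nnnorm, ← ofReal_norm_eq_coe_nnnorm,
        ← ENNReal.ofReal_mul (pow_nonneg (div_nonneg (by linarith) (by linarith)) k)]
      apply ENNReal.ofReal_le_ofReal
      rw [norm_pow, norm_pow, ← mul_pow]
      apply pow_le_pow_left₀ (norm_nonneg _)
      rw [div_mul_eq_mul_div, le_div_iff₀ (by linarith)]
      nlinarith [abs_key ℓ hℓ0 hℓ1 z hz]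
    · rw [← hf1]
      exact le_iSup₂ (f := fun z (_ : z ∈ S) => f z) 1 h1S
  -- inf
  have hinf : (⨅ z ∈ (fun w : ℂ => -w) ⁻¹' S, f z) =
      ENNReal.ofReal (((1 + a) / (1 - a)) ^ k) := by
    apply le_antisymm
    · rw [← hfn1]
      exact iInf₂_le (f := fun z (_ : z ∈ (fun w : ℂ => -w) ⁻¹' S) => f z) (-1) hn1S
    · refine le_iInf₂ fun z hz => ?_
      rw [hS] at hz
      simp only [Set.mem_preimage, Set.mem_setOf_eq] at hz
      have hre : ℓ ≤ (-z).re := re_ge ℓ (-z) hz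
      rw [Complex.neg_re] at hre
      have hzm : z - ((a : ℝ) : ℂ) ≠ 0 := by
        intro h
        have : (z - ((a : ℝ) : ℂ)).re = 0 := by rw [h]; simp
        simp only [Complex.sub_re, Complex.ofReal_re] at this
        linarith
      rw [hf]
      simp only
      rw [ENNReal.le_div_iff_mul_le (Or.inr (by simp [pow_ne_zero, hzm])) (Or.inl (by simp))]
      rw [← ofReal_norm_eq_coe_nnnorm, ← ofReal_norm_eq_coe_nnnorm,
        ← ENNReal.ofReal_mul (pow_nonneg (div_nonneg (by linarith) (by linarith)) k)]
      apply ENNReal.ofReal_le_ofReal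
      rw [norm_pow, norm_pow, ← mul_pow]
      apply pow_le_pow_left₀ (mul_nonneg (div_nonneg (by linarith) (by linarith)) (norm_nonneg _))
      have hk2 := abs_key ℓ hℓ0 hℓ1 (-z) hz
      have e1 : ‖-z - ((a : ℝ) : ℂ)‖ = ‖z + ((a : ℝ) : ℂ)‖ := by
        rw [show -z - ((a : ℝ) : ℂ) = -(z + ((a : ℝ) : ℂ)) by ring, norm_neg]
      have e2 : ‖-z + ((a : ℝ) : ℂ)‖ = ‖z - ((a : ℝ) : ℂ)‖ := by
        rw [show -z + ((a : ℝ) : ℂ) = -(z - ((a : ℝ) : ℂ)) by ring, norm_neg]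
      rw [e1, e2] at hk2
      rw [div_mul_eq_mul_div, div_le_iff₀ (by linarith)]
      nlinarith
  refine ⟨hsup, hinf, ?_⟩
  rw [hsup, hinf]
  rw [← ENNReal.ofReal_div_of_pos (pow_pos (div_pos (by linarith) (by linarith)) k)]
  congr 1
  rw [show (-(2 * (k : ℤ))) = -((2 * k : ℕ) : ℤ) by push_cast; ring, zpow_neg, zpow_natCast,
    ← inv_pow, inv_div]
  rw [show 2 * k = k + k by ring, pow_add, div_eq_mul_inv, ← inv_pow, inv_div]
end

section
/- Let 0 < ℓ < 1, S = {z ∈ ℂ : |z − (1+ℓ)/2| ≤ (1−ℓ)/2}, −S = {−z : z ∈ S}, and let k be a positive integer. Then for every rational function r = P/Q with P, Q complex polynomials of degree at most k, P ≠ 0 and Q ≠ 0, the separation ratio satisfies sup_{z ∈ S} |r(z)| / inf_{z ∈ −S} |r(z)| ≥ ((1+√ℓ)/(1−√ℓ))^{−2k}, where the ratio is interpreted in the extended nonnegative reals [0, ∞]. -/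
open Polynomial
open scoped NNReal ENNReal

/-- explicit constant for the core inequality -/
noncomputable def zolCore (x y : ℝ) : ℝ≥0 := ((1 - min x y / max x y)/2).toNNReal

lemma zolCore_half {x y : ℝ} (hx : 0 ≤ x) (hxy : x < y) (N : ℕ) (hN : 1 ≤ N) :
    (1 - x/y)/2 * (x^N + y^N) ≤ y^N - x^N := by
  have hy : 0 < y := lt_of_le_of_lt hx hxy
  have h1 : x^N ≤ y^N := pow_le_pow_left₀ hx hxy.le N
  have h2 : x^(N-1) ≤ y^(N-1) := pow_le_pow_left₀ hx hxy.le _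
  have h3 : x^N = x * x^(N-1) := by
    conv_lhs => rw [show N = 1 + (N-1) by omega]
    rw [pow_add, pow_one]
  have h4 : y^N = y * y^(N-1) := by
    conv_lhs => rw [show N = 1 + (N-1) by omega]
    rw [pow_add, pow_one]
  have hxyN : x * y^(N-1) ≤ y^N := by
    rw [h4]; exact mul_le_mul_of_nonneg_right hxy.le (pow_nonneg hy.le _)
  have hxN : x^N ≤ x * y^(N-1) := by
    rw [h3]; exact mul_le_mul_of_nonneg_left h2 hx
  have hdiv : (1 - x/y)/2 * (x^N + y^N) ≤ (1 - x/y) * y^N := by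
    have hc : 0 ≤ 1 - x/y := by
      have : x/y ≤ 1 := (div_le_one hy).2 hxy.le
      linarith
    have : x^N + y^N ≤ 2 * y^N := by linarith
    calc (1 - x/y)/2 * (x^N + y^N) ≤ (1 - x/y)/2 * (2*y^N) := by
          apply mul_le_mul_of_nonneg_left this (by linarith)
      _ = (1 - x/y) * y^N := by ring
  refine hdiv.trans ?_
  have : (1 - x/y) * y^N = y^N - x * y^(N-1) := by
    field_simp
    rw [h4]; ring
  rw [this]
  linarith

lemma zolCore_pos {x y : ℝ} (hx : 0 ≤ x) (hy : 0 < y) (hxy : x ≠ y) : 0 < zolCore x y := by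
  rw [zolCore, Real.toNNReal_pos]
  rcases lt_or_gt_of_ne hxy with h | h
  · rw [min_eq_left h.le, max_eq_right h.le]
    have : x/y < 1 := (div_lt_one hy).2 h
    linarith
  · rw [min_eq_right h.le, max_eq_left h.le]
    have hx0 : 0 < x := hy.trans h
    have : y/x < 1 := (div_lt_one hx0).2 h
    linarith

lemma zolCore_le {x y : ℝ} (hx : 0 ≤ x) (hy : 0 < y) (hxy : x ≠ y) (N : ℕ) (hN : 1 ≤ N) :
    (zolCore x y : ℝ) * (x^N + y^N) ≤ |x^N - y^N| := by
  rcases lt_or_gt_of_ne hxy with h | h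
  · have := zolCore_half hx h N hN
    rw [abs_of_nonpos (by nlinarith [pow_le_pow_left₀ hx h.le N])]
    rw [zolCore, min_eq_left h.le, max_eq_right h.le, Real.coe_toNNReal _ (by
      have : x/y ≤ 1 := (div_le_one hy).2 h.le
      linarith)]
    linarith
  · have := zolCore_half hy.le h N hN
    rw [abs_of_nonneg (by nlinarith [pow_le_pow_left₀ hy.le h.le N])]
    rw [zolCore, min_eq_right h.le, max_eq_left h.le, Real.coe_toNNReal _ (by
      have hx0 : 0 < x := hy.trans h
      have : y/x ≤ 1 := (div_le_one hx0).2 h.le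
      linarith)]
    have : (1 - y/x)/2 * (y^N + x^N) ≤ x^N - y^N := this
    linarith
lemma zol_rootP (a : ℂ) (t : ℝ) (ht0 : 0 < t) (ht1 : t < 1) (hne : ‖a‖ ≠ t)
    (N : ℕ) (hN : 1 ≤ N) :
    zolCore ‖a‖ t * ((t.toNNReal^2)^N * ‖a^N - ((t:ℂ)⁻¹)^N‖₊) ≤ ‖a^N - ((t:ℂ))^N‖₊ := by
  rw [← NNReal.coe_le_coe]
  push_cast
  rw [Real.coe_toNNReal _ ht0.le]
  have hta : ‖(t:ℂ)‖ = t := by rw [Complex.norm_real]; exact Real.norm_of_nonneg ht0.le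
  have h1 : ‖a^N - ((t:ℂ)⁻¹)^N‖ ≤ ‖a‖^N + (t⁻¹)^N := by
    refine (norm_sub_le _ _).trans ?_
    rw [norm_pow, norm_pow, norm_inv, hta]
  have h2 : (t^2)^N * (‖a‖^N + (t⁻¹)^N) ≤ ‖a‖^N + t^N := by
    have e1 : (t^2)^N * (t⁻¹)^N = t^N := by
      rw [← mul_pow]; congr 1; field_simp
    have e2 : (t^2)^N * ‖a‖^N ≤ ‖a‖^N := by
      have : (t^2)^N ≤ 1 := by
        apply pow_le_one₀ (by positivity); nlinarith
      nlinarith [pow_nonneg (norm_nonneg a) N]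
    nlinarith
  have h3 : (zolCore ‖a‖ t : ℝ) * (‖a‖^N + t^N) ≤ |‖a‖^N - t^N| :=
    zolCore_le (norm_nonneg a) ht0 hne N hN
  have h4 : |‖a‖^N - t^N| ≤ ‖a^N - ((t:ℂ))^N‖ := by
    have := abs_norm_sub_norm_le (a^N) (((t:ℂ))^N)
    rwa [norm_pow, norm_pow, hta] at this
  have hc : (0:ℝ) ≤ zolCore ‖a‖ t := (zolCore ‖a‖ t).coe_nonneg
  calc (zolCore ‖a‖ t : ℝ) * ((t^2)^N * ‖a^N - ((t:ℂ)⁻¹)^N‖)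
      ≤ (zolCore ‖a‖ t : ℝ) * ((t^2)^N * (‖a‖^N + (t⁻¹)^N)) := by
        apply mul_le_mul_of_nonneg_left _ hc
        exact mul_le_mul_of_nonneg_left h1 (by positivity)
    _ ≤ (zolCore ‖a‖ t : ℝ) * (‖a‖^N + t^N) := mul_le_mul_of_nonneg_left h2 hc
    _ ≤ |‖a‖^N - t^N| := h3
    _ ≤ _ := h4

lemma zol_rootQ (b : ℂ) (t : ℝ) (ht0 : 0 < t) (ht1 : t < 1) (hne : ‖b‖ ≠ t⁻¹)
    (N : ℕ) (hN : 1 ≤ N) :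
    zolCore ‖b‖ t⁻¹ * ‖b^N - ((t:ℂ))^N‖₊ ≤ ‖b^N - ((t:ℂ)⁻¹)^N‖₊ := by
  rw [← NNReal.coe_le_coe]
  push_cast
  have hti : 0 < t⁻¹ := by positivity
  have htt : t ≤ t⁻¹ := by
    rw [inv_eq_one_div, le_div_iff₀ ht0]; nlinarith
  have hta : ‖(t:ℂ)‖ = t := by rw [Complex.norm_real]; exact Real.norm_of_nonneg ht0.le
  have h1 : ‖b^N - ((t:ℂ))^N‖ ≤ ‖b‖^N + (t⁻¹)^N := by
    refine (norm_sub_le _ _).trans ?_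
    rw [norm_pow, norm_pow, hta]
    have : t^N ≤ (t⁻¹)^N := pow_le_pow_left₀ ht0.le htt N
    linarith
  have h3 : (zolCore ‖b‖ t⁻¹ : ℝ) * (‖b‖^N + (t⁻¹)^N) ≤ |‖b‖^N - (t⁻¹)^N| :=
    zolCore_le (norm_nonneg b) hti hne N hN
  have h4 : |‖b‖^N - (t⁻¹)^N| ≤ ‖b^N - ((t:ℂ)⁻¹)^N‖ := by
    have := abs_norm_sub_norm_le (b^N) (((t:ℂ)⁻¹)^N)
    rwa [norm_pow, norm_pow, norm_inv, hta] at this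
  have hc : (0:ℝ) ≤ zolCore ‖b‖ t⁻¹ := (zolCore ‖b‖ t⁻¹).coe_nonneg
  calc (zolCore ‖b‖ t⁻¹ : ℝ) * ‖b^N - ((t:ℂ))^N‖
      ≤ (zolCore ‖b‖ t⁻¹ : ℝ) * (‖b‖^N + (t⁻¹)^N) := mul_le_mul_of_nonneg_left h1 hc
    _ ≤ |‖b‖^N - (t⁻¹)^N| := h3
    _ ≤ _ := h4

lemma zol_prod_swap {α β M : Type*} [CommMonoid M] (s : Finset α) (m : Multiset β) (f : α → β → M) :
    ∏ i ∈ s, (m.map (f i)).prod = (m.map (fun b => ∏ i ∈ s, f i b)).prod := by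
  induction m using Multiset.induction with
  | empty => simp
  | cons a m ih => simp [Multiset.map_cons, Multiset.prod_cons, Finset.prod_mul_distrib, ih]

lemma zol_nnnorm_multiset_prod (m : Multiset ℂ) : ‖m.prod‖₊ = (m.map (fun z => ‖z‖₊)).prod := by
  induction m using Multiset.induction with
  | empty => simp
  | cons a m ih => simp [Multiset.map_cons, Multiset.prod_cons, nnnorm_mul, ih]

lemma zol_prod_roots_unity (N : ℕ) (hN : 1 ≤ N) (x y : ℂ) :
    ∏ η ∈ nthRootsFinset N (1:ℂ), (x - η * y) = x^N - y^N := by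
  have hprim := Complex.isPrimitiveRoot_exp N (by omega)
  have hcard : (nthRootsFinset N (1:ℂ)).card = N := hprim.card_nthRootsFinset
  by_cases hy : y = 0
  · subst hy
    simp only [mul_zero, sub_zero, Finset.prod_const, hcard]
    rw [zero_pow (by omega : N ≠ 0), sub_zero]
  · have h := Polynomial.X_pow_sub_one_eq_prod (by omega : 0 < N) hprim
    have h2 := congrArg (Polynomial.eval (x/y)) h
    rw [Polynomial.eval_prod] at h2
    simp only [eval_sub, eval_pow, eval_X, eval_one, eval_C] at h2
    have h3 : y^N * ((x/y)^N - 1) = x^N - y^N := by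
      rw [div_pow, mul_sub, mul_one, mul_div_assoc', mul_div_right_comm, div_self (pow_ne_zero N hy), one_mul]
    have h4 : ∏ η ∈ nthRootsFinset N (1:ℂ), (x - η * y)
        = y^N * ∏ η ∈ nthRootsFinset N (1:ℂ), (x/y - η) := by
      have : ∀ η ∈ nthRootsFinset N (1:ℂ), (x - η * y) = y * (x/y - η) := by
        intro η _; field_simp
      rw [Finset.prod_congr rfl this, Finset.prod_mul_distrib, Finset.prod_const, hcard]
    rw [h4, ← h2, h3]

lemma zol_circle_prod (R : ℂ[X]) (N : ℕ) (hN : 1 ≤ N) (r : ℂ) :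
    ∏ η ∈ nthRootsFinset N (1:ℂ), ‖R.eval (r * η)‖₊
      = ‖R.leadingCoeff‖₊ ^ N * (R.roots.map (fun a => ‖a^N - r^N‖₊)).prod := by
  have hcard : (nthRootsFinset N (1:ℂ)).card = N :=
    (Complex.isPrimitiveRoot_exp N (by omega)).card_nthRootsFinset
  have heval : ∀ η, R.eval (r * η) = R.leadingCoeff * (R.roots.map (fun a => r * η - a)).prod :=
    fun η => (IsAlgClosed.splits R).eval_eq_prod_roots _
  calc ∏ η ∈ nthRootsFinset N (1:ℂ), ‖R.eval (r * η)‖₊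
      = ∏ η ∈ nthRootsFinset N (1:ℂ),
          (‖R.leadingCoeff‖₊ * (R.roots.map (fun a => ‖r * η - a‖₊)).prod) := by
        refine Finset.prod_congr rfl fun η _ => ?_
        rw [heval η, nnnorm_mul, zol_nnnorm_multiset_prod, Multiset.map_map]
        rfl
    _ = ‖R.leadingCoeff‖₊ ^ N * ∏ η ∈ nthRootsFinset N (1:ℂ),
          (R.roots.map (fun a => ‖r * η - a‖₊)).prod := by
        rw [Finset.prod_mul_distrib, Finset.prod_const, hcard]
    _ = ‖R.leadingCoeff‖₊ ^ N * (R.roots.map (fun a => ‖a^N - r^N‖₊)).prod := by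
        rw [zol_prod_swap]
        have hmap : Multiset.map (fun b => ∏ i ∈ nthRootsFinset N (1:ℂ), ‖r * i - b‖₊) R.roots
            = Multiset.map (fun a => ‖a ^ N - r ^ N‖₊) R.roots := by
          refine Multiset.map_congr rfl fun a _ => ?_
          have h1 : ∀ η : ℂ, ‖r * η - a‖₊ = ‖a - η * r‖₊ := by
            intro η
            rw [← nnnorm_neg]; congr 1; ring
          simp_rw [h1]
          rw [← zol_prod_roots_unity N hN a r]
          exact (nnnorm_prod _ _).symm
        rw [hmap]

lemma zol_psi_mem (s : ℝ) (hs0 : 0 < s) (hs1 : s < 1) (w : ℂ) (hw : ‖w‖ * (1+s) ≤ 1 - s) :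
    ‖(s:ℂ)*(1+w)/(1-w) - (((1+s^2)/2 : ℝ):ℂ)‖ ≤ (1 - s^2)/2 := by
  have hwlt : ‖w‖ < 1 := by nlinarith [norm_nonneg w]
  have hw1 : w ≠ 1 := by
    intro h; rw [h, norm_one] at hwlt; exact lt_irrefl 1 hwlt
  have hden : (1:ℂ) - w ≠ 0 := sub_ne_zero.2 (Ne.symm hw1)
  have hden2 : (2:ℂ) * (1 - w) ≠ 0 := by simp [hden]
  have key : (s:ℂ)*(1+w)/(1-w) - (((1+s^2)/2 : ℝ):ℂ)
      = ((((1+s)^2:ℝ):ℂ)*w - (((1-s)^2:ℝ):ℂ)) / (2*(1-w)) := by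
    push_cast
    field_simp
    ring
  rw [key, norm_div]
  rw [div_le_iff₀ (norm_pos_iff.2 hden2)]
  set u := w.re with hu
  set v := w.im with hv
  have hw2 : (u^2+v^2)*(1+s)^2 ≤ (1-s)^2 := by
    have h1 : ‖w‖*(1+s) ≥ 0 := by positivity
    have h2 : (‖w‖*(1+s))^2 ≤ (1-s)^2 := by nlinarith
    have h3 : ‖w‖^2 = u^2 + v^2 := by
      rw [Complex.sq_norm, Complex.normSq_apply, ← hu, ← hv]; ring
    nlinarith [h3]
  have habs1 : ‖(((1+s)^2:ℝ):ℂ)*w - (((1-s)^2:ℝ):ℂ)‖^2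
      = ((1+s)^2*u - (1-s)^2)^2 + ((1+s)^2*v)^2 := by
    rw [Complex.sq_norm, Complex.normSq_apply, Complex.sub_re, Complex.sub_im,
      Complex.re_ofReal_mul, Complex.im_ofReal_mul, Complex.ofReal_re, Complex.ofReal_im]
    ring
  have habs2 : ‖2*(1-w)‖^2 = 4*((1-u)^2 + v^2) := by
    rw [Complex.sq_norm, map_mul, Complex.normSq_apply, Complex.normSq_apply,
      Complex.sub_re, Complex.sub_im, Complex.one_re, Complex.one_im]
    norm_num
    ring
  have hfin : ‖(((1+s)^2:ℝ):ℂ)*w - (((1-s)^2:ℝ):ℂ)‖^2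
      ≤ ((1 - s^2)/2 * ‖2*(1-w)‖)^2 := by
    rw [mul_pow, habs2, habs1]
    nlinarith
  calc ‖(((1+s)^2:ℝ):ℂ)*w - (((1-s)^2:ℝ):ℂ)‖
      = Real.sqrt (‖(((1+s)^2:ℝ):ℂ)*w - (((1-s)^2:ℝ):ℂ)‖^2) := by
        rw [Real.sqrt_sq (norm_nonneg _)]
    _ ≤ Real.sqrt (((1 - s^2)/2 * ‖2*(1-w)‖)^2) := Real.sqrt_le_sqrt hfin
    _ = (1 - s^2)/2 * ‖2*(1-w)‖ :=
        Real.sqrt_sq (mul_nonneg (by nlinarith) (norm_nonneg _))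

lemma zol_psi_inv (s : ℝ) (w : ℂ) (h0 : w ≠ 0) (h1 : w ≠ 1) :
    (s:ℂ)*(1+w⁻¹)/(1-w⁻¹) = -((s:ℂ)*(1+w)/(1-w)) := by
  have hden : (1:ℂ) - w ≠ 0 := sub_ne_zero.2 (Ne.symm h1)
  have hden' : (1:ℂ) - w⁻¹ ≠ 0 := by
    rw [sub_ne_zero]
    intro h
    apply h1
    field_simp at h
    simp [h]
  have hden3 : (-1:ℂ) + w ≠ 0 := by
    intro h; apply hden; linear_combination -h
  field_simp
  ring_nf

noncomputable def zolTr (s : ℝ) (k : ℕ) (R : ℂ[X]) : ℂ[X] :=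
  ∑ j ∈ Finset.range (k+1), Polynomial.C (R.coeff j * (s:ℂ)^j) * (1 + Polynomial.X)^j
    * (1 - Polynomial.X)^(k-j)

lemma zolTr_eval (s : ℝ) (k : ℕ) (R : ℂ[X]) (hR : R.natDegree < k + 1) (w : ℂ) (hw : w ≠ 1) :
    (zolTr s k R).eval w = (1-w)^k * R.eval ((s:ℂ)*(1+w)/(1-w)) := by
  have hden : (1:ℂ) - w ≠ 0 := sub_ne_zero.2 (Ne.symm hw)
  rw [zolTr, Polynomial.eval_finset_sum, Polynomial.eval_eq_sum_range' hR, Finset.mul_sum]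
  refine Finset.sum_congr rfl fun j hj => ?_
  have hjk : j ≤ k := by
    have := Finset.mem_range.1 hj; omega
  simp only [eval_mul, eval_pow, eval_add, eval_sub, eval_one, eval_X, eval_C]
  rw [div_pow, mul_pow]
  rw [show (1-w)^k = (1-w)^(k-j) * (1-w)^j by rw [← pow_add]; congr 1; omega]
  field_simp

lemma zolTr_natDegree (s : ℝ) (k : ℕ) (R : ℂ[X]) : (zolTr s k R).natDegree ≤ k := by
  refine Polynomial.natDegree_sum_le_of_forall_le _ _ fun j hj => ?_
  have hjk : j ≤ k := by have := Finset.mem_range.1 hj; omega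
  calc (Polynomial.C (R.coeff j * (s:ℂ)^j) * (1 + Polynomial.X)^j
        * (1 - Polynomial.X)^(k-j)).natDegree
      ≤ (Polynomial.C (R.coeff j * (s:ℂ)^j) * (1 + Polynomial.X)^j).natDegree
        + ((1 - Polynomial.X)^(k-j) : ℂ[X]).natDegree := Polynomial.natDegree_mul_le
    _ ≤ ((Polynomial.C (R.coeff j * (s:ℂ)^j)).natDegree
        + ((1 + Polynomial.X)^j : ℂ[X]).natDegree) + ((1 - Polynomial.X)^(k-j) : ℂ[X]).natDegree := by
        have := Polynomial.natDegree_mul_le (p := Polynomial.C (R.coeff j * (s:ℂ)^j))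
          (q := (1 + Polynomial.X)^j)
        omega
    _ ≤ (0 + j * 1) + (k-j) * 1 := by
        have h1 : (Polynomial.C (R.coeff j * (s:ℂ)^j)).natDegree = 0 := Polynomial.natDegree_C _
        have h2 : ((1 + Polynomial.X)^j : ℂ[X]).natDegree ≤ j * 1 := by
          refine Polynomial.natDegree_pow_le.trans ?_
          have : ((1 + Polynomial.X : ℂ[X])).natDegree ≤ 1 := by
            refine Polynomial.natDegree_add_le_of_degree_le ?_ ?_ <;> simp
          exact Nat.mul_le_mul_left j this
        have h3 : ((1 - Polynomial.X)^(k-j) : ℂ[X]).natDegree ≤ (k-j) * 1 := by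
          refine Polynomial.natDegree_pow_le.trans ?_
          have : ((1 - Polynomial.X : ℂ[X])).natDegree ≤ 1 := by
            refine Polynomial.natDegree_sub_le_iff_left ?_ |>.2 ?_ <;> simp
          exact Nat.mul_le_mul_left (k-j) this
        omega
    _ ≤ k := by omega

lemma zolTr_ne_zero (s : ℝ) (hs0 : 0 < s) (k : ℕ) (R : ℂ[X]) (hR : R ≠ 0)
    (hRdeg : R.natDegree < k + 1) : zolTr s k R ≠ 0 := by
  obtain ⟨z, hz⟩ : ∃ z : ℂ, R.eval z ≠ 0 ∧ z ≠ -(s:ℂ) := by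
    have hfin : ({z : ℂ | R.IsRoot z} ∪ {-(s:ℂ)}).Finite :=
      (R.finite_setOf_isRoot hR).union (Set.finite_singleton _)
    obtain ⟨z, hz⟩ := hfin.infinite_compl.nonempty
    simp only [Set.mem_compl_iff, Set.mem_union, Set.mem_setOf_eq, Set.mem_singleton_iff,
      not_or] at hz
    exact ⟨z, hz.1, hz.2⟩
  set w : ℂ := (z - s)/(z + s) with hwdef
  have hzs : z + (s:ℂ) ≠ 0 := by
    intro h
    apply hz.2
    linear_combination h
  have hsc : (s:ℂ) ≠ 0 := by
    simpa using hs0.ne'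
  have hw1 : w ≠ 1 := by
    rw [hwdef]
    intro h
    rw [div_eq_one_iff_eq hzs] at h
    have : (s:ℂ) = 0 := by linear_combination -h/2
    exact hsc this
  have hww : (s:ℂ)*(1+w)/(1-w) = z := by
    rw [hwdef]
    have h1 : (1:ℂ) - (z - s)/(z + s) ≠ 0 := by
      rw [hwdef] at hw1
      exact sub_ne_zero.2 (Ne.symm hw1)
    field_simp
    rw [div_eq_iff (by intro h; apply hsc; linear_combination h/2 : z + (s:ℂ) - (z - s) ≠ 0)]
    ring
  intro hzero
  have := zolTr_eval s k R hRdeg w hw1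
  rw [hzero, Polynomial.eval_zero, hww] at this
  have hden : (1:ℂ) - w ≠ 0 := sub_ne_zero.2 (Ne.symm hw1)
  exact hz.1 (by
    rcases mul_eq_zero.1 this.symm with h | h
    · exact absurd h (pow_ne_zero _ hden)
    · exact h)

lemma zol_pow_conclusion (X q D : ℝ≥0) (hD : 0 < D) (h : ∀ N : ℕ, 1 ≤ N → D * q^N ≤ X^N) :
    q ≤ X := by
  by_contra hq
  push_neg at hq
  have hq0 : 0 < q := lt_of_le_of_lt (zero_le : (0:ℝ≥0) ≤ X) hq
  set r : ℝ := (X:ℝ)/(q:ℝ) with hr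
  have hr0 : 0 ≤ r := by positivity
  have hr1 : r < 1 := by
    rw [hr, div_lt_one (by exact_mod_cast hq0)]
    exact_mod_cast hq
  have hrN : ∀ N : ℕ, 1 ≤ N → (D:ℝ) ≤ r^N := by
    intro N hN
    have := h N hN
    have hcast : (D:ℝ) * (q:ℝ)^N ≤ (X:ℝ)^N := by exact_mod_cast this
    rw [hr, div_pow, le_div_iff₀ (by positivity)]
    linarith
  have htend : Filter.Tendsto (fun N : ℕ => r^N) Filter.atTop (nhds 0) :=
    tendsto_pow_atTop_nhds_zero_of_lt_one hr0 hr1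
  have hev := htend.eventually (gt_mem_nhds (by exact_mod_cast hD : (0:ℝ) < (D:ℝ)))
  rw [Filter.eventually_atTop] at hev
  obtain ⟨N, hNs⟩ := hev
  have h1 := hrN (max N 1) (le_max_right _ _)
  have h2 := hNs (max N 1) (le_max_left _ _)
  linarith

lemma zol_final (C : ENNReal) (c : ℝ) (hc : 0 < c)
    (h : ∀ u : ℝ, 0 < u → u < c → ENNReal.ofReal u ≤ C) :
    ENNReal.ofReal c ≤ C := by
  by_contra hlt
  push_neg at hlt
  have hne : C ≠ ⊤ := hlt.ne_top
  have h1 : C.toReal < c := (ENNReal.lt_ofReal_iff_toReal_lt hne).1 hlt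
  set u : ℝ := (C.toReal + c)/2 with hu
  have hu0 : 0 < u := by
    have := ENNReal.toReal_nonneg (a := C)
    rw [hu]; linarith
  have hu1 : u < c := by rw [hu]; linarith
  have h2 := h u hu0 hu1
  have h3 : C < ENNReal.ofReal u := by
    conv_lhs => rw [← ENNReal.ofReal_toReal hne]
    rw [ENNReal.ofReal_lt_ofReal_iff hu0]
    rw [hu]; linarith
  exact absurd (h2.trans_lt h3) (lt_irrefl _)

lemma zol_pow_eq {x y : ℝ} (hx : 0 ≤ x) (hy : 0 ≤ y) {N : ℕ} (hN : N ≠ 0) (h : x^N = y^N) :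
    x = y := by
  rcases lt_trichotomy x y with hlt | he | hgt
  · exact absurd h (ne_of_lt (pow_lt_pow_left₀ hlt hx hN))
  · exact he
  · exact absurd h.symm (ne_of_lt (pow_lt_pow_left₀ hgt hy hN))

lemma zol_KEY (s : ℝ) (hs0 : 0 < s) (hs1 : s < 1) (k : ℕ) (hk : 0 < k)
    (P Q : ℂ[X]) (hP : P ≠ 0) (hQ : Q ≠ 0)
    (hPdeg : P.natDegree < k+1) (hQdeg : Q.natDegree < k+1)
    (S : Set ℂ) (hmem : ∀ w : ℂ, ‖w‖ ≤ (1-s)/(1+s) → ((s:ℂ)*(1+w)/(1-w)) ∈ S)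
    (hPS : ∀ z : ℂ, -z ∈ S → P.eval z ≠ 0)
    (A B : ENNReal)
    (hAle : ∀ z ∈ S, (‖P.eval z‖₊ : ENNReal) / (‖Q.eval z‖₊ : ENNReal) ≤ A)
    (hBle : ∀ z : ℂ, -z ∈ S → B ≤ (‖P.eval z‖₊ : ENNReal) / (‖Q.eval z‖₊ : ENNReal))
    (hTop : A / B ≠ ⊤)
    (t : ℝ) (ht0 : 0 < t) (htρ : t < (1-s)/(1+s))
    (hrootP : ∀ a ∈ (zolTr s k P).roots, ‖a‖ ≠ t)
    (hrootQ1 : ∀ b ∈ (zolTr s k Q).roots, ‖b‖ ≠ t)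
    (hrootQ2 : ∀ b ∈ (zolTr s k Q).roots, ‖b‖ ≠ t⁻¹) :
    ENNReal.ofReal (t^(2*k)) ≤ A / B := by
  have hρ1 : (1-s)/(1+s) < 1 := by
    rw [div_lt_one (by linarith)]; linarith
  have ht1 : t < 1 := htρ.trans hρ1
  set TP := zolTr s k P with hTPdef
  set TQ := zolTr s k Q with hTQdef
  have hTP0 : TP ≠ 0 := zolTr_ne_zero s hs0 k P hP hPdeg
  have hTQ0 : TQ ≠ 0 := zolTr_ne_zero s hs0 k Q hQ hQdeg
  have hcardP : TP.roots.card ≤ k := (TP.card_roots').trans (zolTr_natDegree s k P)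
  set τ : ℝ≥0 := t.toNNReal with hτdef
  have hτ : (τ:ℝ) = t := Real.coe_toNNReal t ht0.le
  have hτ1 : τ ≤ 1 := by
    rw [← NNReal.coe_le_coe, hτ, NNReal.coe_one]; exact ht1.le
  set X := (A/B).toNNReal with hXdef
  have hX : (X : ENNReal) = A / B := ENNReal.coe_toNNReal hTop
  set DP := (TP.roots.map (fun a => zolCore ‖a‖ t)).prod with hDPdef
  set DQ := (TQ.roots.map (fun b => zolCore ‖b‖ t⁻¹)).prod with hDQdef
  have hDP0 : DP ≠ 0 := Multiset.prod_ne_zero (by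
    intro h0
    obtain ⟨a, ha, h⟩ := Multiset.mem_map.1 h0
    exact (zolCore_pos (norm_nonneg a) ht0 (hrootP a ha)).ne' h)
  have hDQ0 : DQ ≠ 0 := Multiset.prod_ne_zero (by
    intro h0
    obtain ⟨b, hb, h⟩ := Multiset.mem_map.1 h0
    exact (zolCore_pos (norm_nonneg b) (inv_pos.2 ht0) (hrootQ2 b hb)).ne' h)
  have hgoal : τ^(2*k) ≤ X := by
    apply zol_pow_conclusion X (τ^(2*k)) (DP*DQ) (pos_iff_ne_zero.2 (mul_ne_zero hDP0 hDQ0))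
    intro N hN
    have hNne : N ≠ 0 := by omega
    set I := nthRootsFinset N (1:ℂ) with hIdef
    have hIcard : I.card = N := (Complex.isPrimitiveRoot_exp N hNne).card_nthRootsFinset
    have hIne : I.Nonempty := Finset.card_pos.1 (by omega)
    set tc : ℂ := ((t:ℝ):ℂ) with htcdef
    have htc : ‖tc‖ = t := by
      rw [htcdef, Complex.norm_real]; exact Real.norm_of_nonneg ht0.le
    have hnormη : ∀ η ∈ I, ‖η‖ = 1 := by
      intro η hη
      have hpow : η^N = 1 := (Polynomial.mem_nthRootsFinset (by omega) 1).1 hη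
      refine zol_pow_eq (norm_nonneg η) zero_le_one hNne ?_
      rw [← norm_pow, hpow, norm_one, one_pow]
    have hwi_norm : ∀ η ∈ I, ‖tc * η‖ = t := by
      intro η hη; rw [norm_mul, htc, hnormη η hη, mul_one]
    have hwo_norm : ∀ η ∈ I, ‖tc⁻¹ * η‖ = t⁻¹ := by
      intro η hη; rw [norm_mul, norm_inv, htc, hnormη η hη, mul_one]
    have hwi_ne1 : ∀ η ∈ I, tc * η ≠ 1 := by
      intro η hη h
      have := hwi_norm η hη
      rw [h, norm_one] at this
      linarith
    have hwo_ne1 : ∀ η ∈ I, tc⁻¹ * η ≠ 1 := by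
      intro η hη h
      have h2 := hwo_norm η hη
      rw [h, norm_one] at h2
      have : t = 1 := by
        rw [← inv_inv t, ← h2, inv_one]
      linarith
    have hziS : ∀ η ∈ I, ((s:ℂ)*(1+tc*η)/(1-tc*η)) ∈ S := by
      intro η hη
      exact hmem _ (by rw [hwi_norm η hη]; exact htρ.le)
    have hzoS : ∀ η ∈ I, -((s:ℂ)*(1+tc⁻¹*η)/(1-tc⁻¹*η)) ∈ S := by
      intro η hη
      have hη0 : η ≠ 0 := Polynomial.ne_zero_of_mem_nthRootsFinset one_ne_zero hη
      have htc0 : tc ≠ 0 := by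
        intro h; rw [h, norm_zero] at htc; linarith
      have hw0 : tc⁻¹*η ≠ 0 := mul_ne_zero (inv_ne_zero htc0) hη0
      have hinv := zol_psi_inv s (tc⁻¹*η) hw0 (hwo_ne1 η hη)
      rw [← hinv]
      apply hmem
      rw [norm_inv, hwo_norm η hη, inv_inv]
      exact htρ.le
    have hTPi : ∀ η ∈ I, TP.eval (tc*η) = (1-tc*η)^k * P.eval ((s:ℂ)*(1+tc*η)/(1-tc*η)) :=
      fun η hη => zolTr_eval s k P hPdeg _ (hwi_ne1 η hη)
    have hTQi : ∀ η ∈ I, TQ.eval (tc*η) = (1-tc*η)^k * Q.eval ((s:ℂ)*(1+tc*η)/(1-tc*η)) :=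
      fun η hη => zolTr_eval s k Q hQdeg _ (hwi_ne1 η hη)
    have hTPo : ∀ η ∈ I, TP.eval (tc⁻¹*η) = (1-tc⁻¹*η)^k * P.eval ((s:ℂ)*(1+tc⁻¹*η)/(1-tc⁻¹*η)) :=
      fun η hη => zolTr_eval s k P hPdeg _ (hwo_ne1 η hη)
    have hTQo : ∀ η ∈ I, TQ.eval (tc⁻¹*η) = (1-tc⁻¹*η)^k * Q.eval ((s:ℂ)*(1+tc⁻¹*η)/(1-tc⁻¹*η)) :=
      fun η hη => zolTr_eval s k Q hQdeg _ (hwo_ne1 η hη)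
    have hbne : ∀ η ∈ I, TQ.eval (tc*η) ≠ 0 := by
      intro η hη h0
      exact hrootQ1 _ ((Polynomial.mem_roots').2 ⟨hTQ0, h0⟩) (hwi_norm η hη)
    have hdne : ∀ η ∈ I, TQ.eval (tc⁻¹*η) ≠ 0 := by
      intro η hη h0
      exact hrootQ2 _ ((Polynomial.mem_roots').2 ⟨hTQ0, h0⟩) (hwo_norm η hη)
    have hcne : ∀ η ∈ I, TP.eval (tc⁻¹*η) ≠ 0 := by
      intro η hη
      rw [hTPo η hη]
      exact mul_ne_zero (pow_ne_zero _ (sub_ne_zero.2 (Ne.symm (hwo_ne1 η hη))))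
        (hPS _ (hzoS η hη))
    have hQzi : ∀ η ∈ I, Q.eval ((s:ℂ)*(1+tc*η)/(1-tc*η)) ≠ 0 := by
      intro η hη h0
      exact hbne η hη (by rw [hTQi η hη, h0, mul_zero])
    have hQzo : ∀ η ∈ I, Q.eval ((s:ℂ)*(1+tc⁻¹*η)/(1-tc⁻¹*η)) ≠ 0 := by
      intro η hη h0
      exact hdne η hη (by rw [hTQo η hη, h0, mul_zero])
    have hPzo : ∀ η ∈ I, P.eval ((s:ℂ)*(1+tc⁻¹*η)/(1-tc⁻¹*η)) ≠ 0 := by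
      intro η hη h0
      exact hcne η hη (by rw [hTPo η hη, h0, mul_zero])
    set M := I.sup' hIne (fun η => ‖TP.eval (tc*η)‖₊ / ‖TQ.eval (tc*η)‖₊) with hMdef
    set m := I.inf' hIne (fun η => ‖TP.eval (tc⁻¹*η)‖₊ / ‖TQ.eval (tc⁻¹*η)‖₊) with hmdef
    have hratio_i : ∀ η ∈ I, ‖TP.eval (tc*η)‖₊ / ‖TQ.eval (tc*η)‖₊
        = ‖P.eval ((s:ℂ)*(1+tc*η)/(1-tc*η))‖₊ / ‖Q.eval ((s:ℂ)*(1+tc*η)/(1-tc*η))‖₊ := by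
      intro η hη
      rw [hTPi η hη, hTQi η hη, nnnorm_mul, nnnorm_mul]
      exact mul_div_mul_left _ _ (by
        simp only [ne_eq, nnnorm_eq_zero]
        exact pow_ne_zero _ (sub_ne_zero.2 (Ne.symm (hwi_ne1 η hη))))
    have hratio_o : ∀ η ∈ I, ‖TP.eval (tc⁻¹*η)‖₊ / ‖TQ.eval (tc⁻¹*η)‖₊
        = ‖P.eval ((s:ℂ)*(1+tc⁻¹*η)/(1-tc⁻¹*η))‖₊ / ‖Q.eval ((s:ℂ)*(1+tc⁻¹*η)/(1-tc⁻¹*η))‖₊ := by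
      intro η hη
      rw [hTPo η hη, hTQo η hη, nnnorm_mul, nnnorm_mul]
      exact mul_div_mul_left _ _ (by
        simp only [ne_eq, nnnorm_eq_zero]
        exact pow_ne_zero _ (sub_ne_zero.2 (Ne.symm (hwo_ne1 η hη))))
    have hAM : (M : ENNReal) ≤ A := by
      obtain ⟨η₀, hη₀, hMeq⟩ := Finset.exists_mem_eq_sup' hIne
        (fun η => ‖TP.eval (tc*η)‖₊ / ‖TQ.eval (tc*η)‖₊)
      rw [hMdef, hMeq, hratio_i η₀ hη₀]
      refine le_trans (le_of_eq ?_) (hAle _ (hziS η₀ hη₀))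
      rw [ENNReal.coe_div (by simpa using hQzi η₀ hη₀)]
    have hBm : B ≤ (m : ENNReal) := by
      obtain ⟨η₁, hη₁, hmeq⟩ := Finset.exists_mem_eq_inf' hIne
        (fun η => ‖TP.eval (tc⁻¹*η)‖₊ / ‖TQ.eval (tc⁻¹*η)‖₊)
      rw [hmdef, hmeq, hratio_o η₁ hη₁]
      refine le_trans (hBle _ (hzoS η₁ hη₁)) (le_of_eq ?_)
      rw [ENNReal.coe_div (by simpa using hQzo η₁ hη₁)]
    have hm0 : m ≠ 0 := by
      obtain ⟨η₁, hη₁, hmeq⟩ := Finset.exists_mem_eq_inf' hIne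
        (fun η => ‖TP.eval (tc⁻¹*η)‖₊ / ‖TQ.eval (tc⁻¹*η)‖₊)
      rw [hmdef, hmeq]
      exact div_ne_zero (by simpa using hcne η₁ hη₁) (by simpa using hdne η₁ hη₁)
    have hMmX : M / m ≤ X := by
      rw [← ENNReal.coe_le_coe, ENNReal.coe_div hm0, hX]
      exact ENNReal.div_le_div hAM hBm
    have h1 : ∏ η ∈ I, ‖TP.eval (tc*η)‖₊ ≤ M^N * ∏ η ∈ I, ‖TQ.eval (tc*η)‖₊ := by
      have hle : ∀ η ∈ I, ‖TP.eval (tc*η)‖₊ ≤ M * ‖TQ.eval (tc*η)‖₊ := by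
        intro η hη
        have hb : ‖TQ.eval (tc*η)‖₊ ≠ 0 := by simpa using hbne η hη
        rw [← div_le_iff₀ (pos_iff_ne_zero.2 hb)]
        exact Finset.le_sup' (fun η => ‖TP.eval (tc*η)‖₊ / ‖TQ.eval (tc*η)‖₊) hη
      calc ∏ η ∈ I, ‖TP.eval (tc*η)‖₊ ≤ ∏ η ∈ I, (M * ‖TQ.eval (tc*η)‖₊) :=
            Finset.prod_le_prod' hle
        _ = M^N * ∏ η ∈ I, ‖TQ.eval (tc*η)‖₊ := by
            rw [Finset.prod_mul_distrib, Finset.prod_const, hIcard]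
    have h2 : m^N * ∏ η ∈ I, ‖TQ.eval (tc⁻¹*η)‖₊ ≤ ∏ η ∈ I, ‖TP.eval (tc⁻¹*η)‖₊ := by
      have hle : ∀ η ∈ I, m * ‖TQ.eval (tc⁻¹*η)‖₊ ≤ ‖TP.eval (tc⁻¹*η)‖₊ := by
        intro η hη
        have hd : ‖TQ.eval (tc⁻¹*η)‖₊ ≠ 0 := by simpa using hdne η hη
        have hm' : m ≤ ‖TP.eval (tc⁻¹*η)‖₊ / ‖TQ.eval (tc⁻¹*η)‖₊ := Finset.inf'_le _ hη
        rwa [le_div_iff₀ (pos_iff_ne_zero.2 hd)] at hm'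
      calc m^N * ∏ η ∈ I, ‖TQ.eval (tc⁻¹*η)‖₊ = ∏ η ∈ I, (m * ‖TQ.eval (tc⁻¹*η)‖₊) := by
            rw [Finset.prod_mul_distrib, Finset.prod_const, hIcard]
        _ ≤ ∏ η ∈ I, ‖TP.eval (tc⁻¹*η)‖₊ := Finset.prod_le_prod' hle
    have h3 := zol_circle_prod TP N hN tc
    have h4 := zol_circle_prod TQ N hN tc
    have h5 := zol_circle_prod TP N hN tc⁻¹
    have h6 := zol_circle_prod TQ N hN tc⁻¹
    have h7 : DP * ((τ^(2*k))^N * (TP.roots.map (fun a => ‖a^N - (tc⁻¹)^N‖₊)).prod)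
        ≤ (TP.roots.map (fun a => ‖a^N - tc^N‖₊)).prod := by
      have hstep : (TP.roots.map
            (fun a => zolCore ‖a‖ t * ((τ^2)^N * ‖a^N - (tc⁻¹)^N‖₊))).prod
          ≤ (TP.roots.map (fun a => ‖a^N - tc^N‖₊)).prod :=
        Multiset.prod_map_le_prod_map _ _ (fun a ha => zol_rootP a t ht0 ht1 (hrootP a ha) N hN)
      refine le_trans ?_ hstep
      have hLHS : (TP.roots.map
            (fun a => zolCore ‖a‖ t * ((τ^2)^N * ‖a^N - (tc⁻¹)^N‖₊))).prod
          = DP * (((τ^2)^N)^(TP.roots.card)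
              * (TP.roots.map (fun a => ‖a^N - (tc⁻¹)^N‖₊)).prod) := by
        rw [Multiset.prod_map_mul, Multiset.prod_map_mul, Multiset.map_const',
          Multiset.prod_replicate]
      rw [hLHS]
      have hexp : (τ^(2*k))^N ≤ ((τ^2)^N)^(TP.roots.card) := by
        have he1 : (τ^(2*k))^N = τ^(2*k*N) := by rw [← pow_mul]
        have he2 : ((τ^2)^N)^(TP.roots.card) = τ^(2*(N*TP.roots.card)) := by
          rw [← pow_mul, ← pow_mul]
        rw [he1, he2]
        refine pow_le_pow_of_le_one (zero_le : (0:ℝ≥0) ≤ τ) hτ1 ?_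
        have hmul : N*TP.roots.card ≤ N*k := Nat.mul_le_mul_left N hcardP
        calc 2*(N*TP.roots.card) ≤ 2*(N*k) := Nat.mul_le_mul_left 2 hmul
          _ = 2*k*N := by ring
      exact mul_le_mul' le_rfl (mul_le_mul' hexp le_rfl)
    have h8 : DQ * (TQ.roots.map (fun b => ‖b^N - tc^N‖₊)).prod
        ≤ (TQ.roots.map (fun b => ‖b^N - (tc⁻¹)^N‖₊)).prod := by
      have hstep : (TQ.roots.map (fun b => zolCore ‖b‖ t⁻¹ * ‖b^N - tc^N‖₊)).prod
          ≤ (TQ.roots.map (fun b => ‖b^N - (tc⁻¹)^N‖₊)).prod :=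
        Multiset.prod_map_le_prod_map _ _ (fun b hb => zol_rootQ b t ht0 ht1 (hrootQ2 b hb) N hN)
      refine le_trans (le_of_eq ?_) hstep
      rw [Multiset.prod_map_mul]
    have hQin0 : (TQ.roots.map (fun b => ‖b^N - tc^N‖₊)).prod ≠ 0 := by
      refine Multiset.prod_ne_zero ?_
      intro h0
      obtain ⟨b, hb, hzero⟩ := Multiset.mem_map.1 h0
      rw [nnnorm_eq_zero, sub_eq_zero] at hzero
      have hnorm : ‖b‖^N = t^N := by
        rw [← norm_pow, hzero, norm_pow, htc]
      exact hrootQ1 b hb (zol_pow_eq (norm_nonneg b) ht0.le hNne hnorm)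
    have hLQ0 : ‖TQ.leadingCoeff‖₊ ≠ 0 := by
      simpa using Polynomial.leadingCoeff_ne_zero.2 hTQ0
    have hchain : (DP*DQ) * (τ^(2*k))^N * m^N
          * (‖TQ.leadingCoeff‖₊^N * (TQ.roots.map (fun b => ‖b^N - tc^N‖₊)).prod)
        ≤ M^N * (‖TQ.leadingCoeff‖₊^N * (TQ.roots.map (fun b => ‖b^N - tc^N‖₊)).prod) := by
      calc (DP*DQ) * (τ^(2*k))^N * m^N
            * (‖TQ.leadingCoeff‖₊^N * (TQ.roots.map (fun b => ‖b^N - tc^N‖₊)).prod)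
          = DP * (τ^(2*k))^N * (m^N * (‖TQ.leadingCoeff‖₊^N
              * (DQ * (TQ.roots.map (fun b => ‖b^N - tc^N‖₊)).prod))) := by ring
        _ ≤ DP * (τ^(2*k))^N * (m^N * (‖TQ.leadingCoeff‖₊^N
              * (TQ.roots.map (fun b => ‖b^N - (tc⁻¹)^N‖₊)).prod)) :=
            mul_le_mul' le_rfl (mul_le_mul' le_rfl (mul_le_mul' le_rfl h8))
        _ = DP * (τ^(2*k))^N * (m^N * ∏ η ∈ I, ‖TQ.eval (tc⁻¹*η)‖₊) := by rw [h6]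
        _ ≤ DP * (τ^(2*k))^N * ∏ η ∈ I, ‖TP.eval (tc⁻¹*η)‖₊ :=
            mul_le_mul' le_rfl h2
        _ = ‖TP.leadingCoeff‖₊^N * (DP * ((τ^(2*k))^N
              * (TP.roots.map (fun a => ‖a^N - (tc⁻¹)^N‖₊)).prod)) := by rw [h5]; ring
        _ ≤ ‖TP.leadingCoeff‖₊^N * (TP.roots.map (fun a => ‖a^N - tc^N‖₊)).prod :=
            mul_le_mul' le_rfl h7
        _ = ∏ η ∈ I, ‖TP.eval (tc*η)‖₊ := h3.symm
        _ ≤ M^N * ∏ η ∈ I, ‖TQ.eval (tc*η)‖₊ := h1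
        _ = M^N * (‖TQ.leadingCoeff‖₊^N * (TQ.roots.map (fun b => ‖b^N - tc^N‖₊)).prod) := by
            rw [h4]
    have hZpos : (0:ℝ≥0) < ‖TQ.leadingCoeff‖₊^N * (TQ.roots.map (fun b => ‖b^N - tc^N‖₊)).prod :=
      pos_iff_ne_zero.2 (mul_ne_zero (pow_ne_zero _ hLQ0) hQin0)
    have hMain : (DP*DQ) * (τ^(2*k))^N * m^N ≤ M^N := le_of_mul_le_mul_right hchain hZpos
    have hM_le : M^N ≤ X^N * m^N := by
      have hMm : M ≤ X * m := by
        rw [← div_le_iff₀ (pos_iff_ne_zero.2 hm0)]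
        exact hMmX
      calc M^N ≤ (X*m)^N := pow_le_pow_left' hMm N
        _ = X^N * m^N := mul_pow X m N
    have hmN : (0:ℝ≥0) < m^N := pos_iff_ne_zero.2 (pow_ne_zero _ hm0)
    have hfinal : ((DP*DQ) * (τ^(2*k))^N) * m^N ≤ X^N * m^N := by
      calc ((DP*DQ) * (τ^(2*k))^N) * m^N = (DP*DQ) * (τ^(2*k))^N * m^N := by ring
        _ ≤ M^N := hMain
        _ ≤ X^N * m^N := hM_le
    exact le_of_mul_le_mul_right hfinal hmN
  have hcast : ENNReal.ofReal (t^(2*k)) = ((τ^(2*k) : ℝ≥0) : ENNReal) := by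
    rw [ENNReal.ofReal, Real.toNNReal_pow ht0.le]
  rw [hcast, ← hX]
  exact_mod_cast hgoal



/-- For `0 < ℓ < 1`, `S` the closed disk `{z : |z − (1+ℓ)/2| ≤ (1−ℓ)/2}`
and `−S` its reflection through the origin, every rational function `r = P/Q` with
`deg P ≤ k`, `deg Q ≤ k`, `P ≠ 0 ≠ Q` has separation ratio (in `[0,∞]`)
`sup_{z∈S}|r(z)| / inf_{z∈−S}|r(z)| ≥ ((1+√ℓ)/(1−√ℓ))^{−2k}`. -/
theorem zolotarev_third_problem_lower_bound (ℓ : ℝ) (hℓ0 : 0 < ℓ) (hℓ1 : ℓ < 1)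
    (k : ℕ) (hk : 0 < k)
    (S : Set ℂ)
    (hS : S = {z : ℂ | ‖z - (((1 + ℓ) / 2 : ℝ) : ℂ)‖ ≤ (1 - ℓ) / 2})
    (P Q : Polynomial ℂ) (hP : P ≠ 0) (hQ : Q ≠ 0)
    (hPdeg : P.degree ≤ (k : ℕ)) (hQdeg : Q.degree ≤ (k : ℕ)) :
    ENNReal.ofReal (((1 + Real.sqrt ℓ) / (1 - Real.sqrt ℓ)) ^ (-(2 * (k : ℤ)))) ≤
      (⨆ z ∈ S, (‖P.eval z‖₊ : ENNReal) / (‖Q.eval z‖₊ : ENNReal)) /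
        (⨅ z ∈ (fun w : ℂ => -w) ⁻¹' S, (‖P.eval z‖₊ : ENNReal) / (‖Q.eval z‖₊ : ENNReal)) := by
  set s := Real.sqrt ℓ with hsdef
  have hs0 : 0 < s := Real.sqrt_pos.2 hℓ0
  have hs1 : s < 1 := by
    rw [hsdef, show (1:ℝ) = Real.sqrt 1 by rw [Real.sqrt_one]]
    exact Real.sqrt_lt_sqrt hℓ0.le hℓ1
  have hsq : s^2 = ℓ := Real.sq_sqrt hℓ0.le
  set ρ : ℝ := (1-s)/(1+s) with hρdef
  have hρ0 : 0 < ρ := div_pos (by linarith) (by linarith)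
  have hρ1 : ρ < 1 := by
    rw [hρdef, div_lt_one (by linarith)]; linarith
  have hconst : ((1 + s) / (1 - s)) ^ (-(2 * (k:ℤ))) = ρ^(2*k) := by
    have h2k : (2 * (k:ℤ)) = ((2*k : ℕ) : ℤ) := by push_cast; ring
    rw [h2k, zpow_neg, zpow_natCast, ← inv_pow, inv_div]
  rw [hconst]
  set A := ⨆ z ∈ S, (‖P.eval z‖₊ : ENNReal) / (‖Q.eval z‖₊ : ENNReal) with hAdef
  set B := ⨅ z ∈ (fun w : ℂ => -w) ⁻¹' S, (‖P.eval z‖₊ : ENNReal) / (‖Q.eval z‖₊ : ENNReal)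
    with hBdef
  have hAle : ∀ z ∈ S, (‖P.eval z‖₊ : ENNReal) / (‖Q.eval z‖₊ : ENNReal) ≤ A := by
    intro z hz
    rw [hAdef]
    exact le_iSup₂ (f := fun z (_ : z ∈ S) => (‖P.eval z‖₊ : ENNReal) / (‖Q.eval z‖₊ : ENNReal))
      z hz
  have hBle : ∀ z : ℂ, -z ∈ S → B ≤ (‖P.eval z‖₊ : ENNReal) / (‖Q.eval z‖₊ : ENNReal) := by
    intro z hz
    rw [hBdef]
    exact iInf₂_le z (by simpa using hz)
  by_cases hB0 : B = 0
  · -- denominator zero: ratio is ⊤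
    have hSinf : S.Infinite := by
      have hsub : (fun x : ℝ => (x:ℂ)) '' Set.Icc ℓ 1 ⊆ S := by
        rintro z ⟨x, hx, rfl⟩
        rw [hS]
        simp only [Set.mem_setOf_eq]
        rw [← Complex.ofReal_sub, Complex.norm_real, Real.norm_eq_abs]
        rw [abs_le]
        constructor <;> [nlinarith [hx.1]; nlinarith [hx.2]]
      exact Set.Infinite.mono hsub ((Set.Icc_infinite (by linarith)).image
        (fun a _ b _ h => by exact_mod_cast h))
    obtain ⟨z, hz⟩ := (hSinf.diff (P.finite_setOf_isRoot hP)).nonempty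
    rw [Set.mem_diff] at hz
    have hzP : P.eval z ≠ 0 := hz.2
    have hA0 : A ≠ 0 := by
      intro h0
      have hv := hAle z hz.1
      rw [h0, le_zero_iff, ENNReal.div_eq_zero_iff] at hv
      rcases hv with hv | hv
      · rw [ENNReal.coe_eq_zero, nnnorm_eq_zero] at hv
        exact hzP hv
      · exact ENNReal.coe_ne_top hv
    rw [hB0, ENNReal.div_zero hA0]
    exact le_top
  · have hPS : ∀ z : ℂ, -z ∈ S → P.eval z ≠ 0 := by
      intro z hz h0
      apply hB0
      refine le_antisymm ?_ (zero_le)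
      refine le_trans (hBle z hz) ?_
      rw [h0]
      simp
    by_cases hTop : A / B = ⊤
    · rw [hTop]; exact le_top
    · have hmem : ∀ w : ℂ, ‖w‖ ≤ ρ → ((s:ℂ)*(1+w)/(1-w)) ∈ S := by
        intro w hw
        rw [hS]
        simp only [Set.mem_setOf_eq]
        have hww : ‖w‖ * (1+s) ≤ 1 - s := by
          rw [hρdef, le_div_iff₀ (by linarith : (0:ℝ) < 1+s)] at hw
          linarith
        have := zol_psi_mem s hs0 hs1 w hww
        rw [hsq] at this
        exact this
      have hPdeg' : P.natDegree < k + 1 :=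
        Nat.lt_succ_of_le ((Polynomial.natDegree_le_iff_degree_le).2 hPdeg)
      have hQdeg' : Q.natDegree < k + 1 :=
        Nat.lt_succ_of_le ((Polynomial.natDegree_le_iff_degree_le).2 hQdeg)
      set Bad : Set ℝ := (fun a : ℂ => ‖a‖) '' {a | a ∈ (zolTr s k P).roots}
        ∪ ((fun a : ℂ => ‖a‖) '' {a | a ∈ (zolTr s k Q).roots}
          ∪ (fun a : ℂ => ‖a‖⁻¹) '' {a | a ∈ (zolTr s k Q).roots}) with hBaddef
      have hBadFin : Bad.Finite :=
        ((Multiset.finite_toSet _).image _).union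
          (((Multiset.finite_toSet _).image _).union ((Multiset.finite_toSet _).image _))
      apply zol_final _ _ (by positivity)
      intro u hu0 hu
      have hcont : ContinuousAt (fun x : ℝ => x^(2*k)) ρ := (continuous_pow _).continuousAt
      rw [Metric.continuousAt_iff] at hcont
      obtain ⟨δ, hδ0, hδ⟩ := hcont (ρ^(2*k) - u) (by linarith)
      set t₀ := max (ρ/2) (ρ - δ/2) with ht₀def
      have ht₀0 : 0 < t₀ := lt_max_of_lt_left (by linarith)
      have ht₀ρ : t₀ < ρ := max_lt (by linarith) (by linarith)
      have hdist : dist t₀ ρ < δ := by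
        rw [Real.dist_eq, abs_of_nonpos (by linarith)]
        have : ρ - δ/2 ≤ t₀ := le_max_right _ _
        linarith
      have ht₀u : u < t₀^(2*k) := by
        have hd := hδ hdist
        rw [Real.dist_eq] at hd
        have := abs_lt.1 hd
        linarith [this.1]
      obtain ⟨t, htmem⟩ := ((Set.Ioo_infinite ht₀ρ).diff hBadFin).nonempty
      rw [Set.mem_diff, Set.mem_Ioo] at htmem
      obtain ⟨⟨ht₀t, htρ⟩, htBad⟩ := htmem
      have ht0 : 0 < t := ht₀0.trans ht₀t
      have hrootP : ∀ a ∈ (zolTr s k P).roots, ‖a‖ ≠ t := by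
        intro a ha h
        exact htBad (Or.inl ⟨a, ha, h⟩)
      have hrootQ1 : ∀ b ∈ (zolTr s k Q).roots, ‖b‖ ≠ t := by
        intro b hb h
        exact htBad (Or.inr (Or.inl ⟨b, hb, h⟩))
      have hrootQ2 : ∀ b ∈ (zolTr s k Q).roots, ‖b‖ ≠ t⁻¹ := by
        intro b hb h
        exact htBad (Or.inr (Or.inr ⟨b, hb, by show ‖b‖⁻¹ = t; rw [h, inv_inv]⟩))
      have hkey := zol_KEY s hs0 hs1 k hk P Q hP hQ hPdeg' hQdeg' S hmem hPS A B hAle hBle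
        hTop t ht0 htρ hrootP hrootQ1 hrootQ2
      refine le_trans (ENNReal.ofReal_le_ofReal ?_) hkey
      calc u ≤ t₀^(2*k) := ht₀u.le
        _ ≤ t^(2*k) := pow_le_pow_left₀ ht₀0.le ht₀t.le (2*k)
end

section
/- Let 0 < a < b, set γ = (√b − √a)/(√b + √a) and ℓ = γ², and define the Möbius transform T(z) = γ·(z − √(ab))/(z + √(ab)). Then for every z ∈ ℂ with z ≠ −√(ab): |z| ≤ a if and only if |T(z) + (1+ℓ)/2| ≤ (1−ℓ)/2, and |z| ≥ b if and only if |T(z) − (1+ℓ)/2| ≤ (1−ℓ)/2. In particular T maps the closed disk I = {|z| ≤ a} into −S and the closed exterior region O = {|z| ≥ b} into S, where S = {w ∈ ℂ : |w − (1+ℓ)/2| ≤ (1−ℓ)/2}. -/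
lemma abs_le_iff_normSq (w : ℂ) (M : ℝ) (hM : 0 ≤ M) :
    ‖w‖ ≤ M ↔ Complex.normSq w ≤ M ^ 2 := by
  rw [← Complex.sq_norm]
  exact (pow_le_pow_iff_left₀ (norm_nonneg w) hM two_ne_zero).symm

lemma key_inner (γ c A : ℝ) (hγ0 : 0 < γ) (hγ1 : γ < 1) (hc : 0 < c)
    (hA0 : 0 ≤ A) (hA : (1 - γ) ^ 2 * c ^ 2 = (1 + γ) ^ 2 * A ^ 2)
    (z : ℂ) (hz : z + (c : ℂ) ≠ 0) :
    ‖z‖ ≤ A ↔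
      ‖(γ : ℂ) * (z - (c : ℂ)) / (z + (c : ℂ)) + (((1 + γ ^ 2) / 2 : ℝ) : ℂ)‖
        ≤ (1 - γ ^ 2) / 2 := by
  have hm : (0 : ℝ) ≤ (1 - γ ^ 2) / 2 := by nlinarith
  have habs : 0 < ‖z + (c : ℂ)‖ := norm_pos_iff.mpr hz
  rw [abs_le_iff_normSq z A hA0, div_add' _ _ _ hz, norm_div, div_le_iff₀ habs,
    abs_le_iff_normSq _ _ (by positivity), mul_pow, Complex.sq_norm]
  simp only [Complex.normSq_apply, Complex.add_re, Complex.add_im, Complex.sub_re,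
    Complex.sub_im, Complex.mul_re, Complex.mul_im, Complex.ofReal_re, Complex.ofReal_im]
  have hA' : γ * ((1 - γ) ^ 2 * c ^ 2) = γ * ((1 + γ) ^ 2 * A ^ 2) := by rw [hA]
  constructor <;> intro h <;>
    nlinarith [hA', mul_nonneg (mul_nonneg hγ0.le (sq_nonneg (1 + γ))) (sub_nonneg.2 h),
      mul_pos hγ0 (pow_pos (by linarith : (0:ℝ) < 1 + γ) 2)]

lemma le_abs_iff_normSq (w : ℂ) (M : ℝ) (hM : 0 ≤ M) :
    M ≤ ‖w‖ ↔ M ^ 2 ≤ Complex.normSq w := by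
  rw [← Complex.sq_norm]
  exact (pow_le_pow_iff_left₀ hM (norm_nonneg w) two_ne_zero).symm

lemma key_outer (γ c B : ℝ) (hγ0 : 0 < γ) (hγ1 : γ < 1) (hc : 0 < c)
    (hB0 : 0 ≤ B) (hB : (1 + γ) ^ 2 * c ^ 2 = (1 - γ) ^ 2 * B ^ 2)
    (z : ℂ) (hz : z + (c : ℂ) ≠ 0) :
    B ≤ ‖z‖ ↔
      ‖(γ : ℂ) * (z - (c : ℂ)) / (z + (c : ℂ)) - (((1 + γ ^ 2) / 2 : ℝ) : ℂ)‖
        ≤ (1 - γ ^ 2) / 2 := by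
  have hm : (0 : ℝ) ≤ (1 - γ ^ 2) / 2 := by nlinarith
  have habs : 0 < ‖z + (c : ℂ)‖ := norm_pos_iff.mpr hz
  rw [le_abs_iff_normSq z B hB0, div_sub' hz, norm_div, div_le_iff₀ habs,
    abs_le_iff_normSq _ _ (by positivity), mul_pow, Complex.sq_norm]
  simp only [Complex.normSq_apply, Complex.add_re, Complex.add_im, Complex.sub_re,
    Complex.sub_im, Complex.mul_re, Complex.mul_im, Complex.ofReal_re, Complex.ofReal_im]
  have hB' : γ * ((1 + γ) ^ 2 * c ^ 2) = γ * ((1 - γ) ^ 2 * B ^ 2) := by rw [hB]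
  constructor <;> intro h <;>
    nlinarith [hB', mul_nonneg (mul_nonneg hγ0.le (sq_nonneg (1 - γ))) (sub_nonneg.2 h),
      mul_pos hγ0 (pow_pos (by linarith : (0:ℝ) < 1 - γ) 2)]



/-- For `0 < a < b`, `γ = (√b − √a)/(√b + √a)`, `ℓ = γ²`, the Möbius
transform `T(z) = γ(z − √(ab))/(z + √(ab))` satisfies, for every `z ≠ −√(ab)`:
`|z| ≤ a ↔ |T z + (1+ℓ)/2| ≤ (1−ℓ)/2` and `|z| ≥ b ↔ |T z − (1+ℓ)/2| ≤ (1−ℓ)/2`.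
In particular `T` maps `I = {|z| ≤ a}` into `−S` and `O = {|z| ≥ b}` into `S`. -/
theorem mobius_maps_annulus_to_zolotarev_disks (a b : ℝ) (ha : 0 < a) (hab : a < b)
    (γ ℓ : ℝ)
    (hγ : γ = (Real.sqrt b - Real.sqrt a) / (Real.sqrt b + Real.sqrt a))
    (hℓ : ℓ = γ ^ 2)
    (T : ℂ → ℂ)
    (hT : T = fun z =>
      (γ : ℂ) * (z - ((Real.sqrt (a * b) : ℝ) : ℂ)) / (z + ((Real.sqrt (a * b) : ℝ) : ℂ))) :
    (∀ z : ℂ, z ≠ -((Real.sqrt (a * b) : ℝ) : ℂ) →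
      ((‖z‖ ≤ a ↔
          ‖T z + (((1 + ℓ) / 2 : ℝ) : ℂ)‖ ≤ (1 - ℓ) / 2) ∧
       (b ≤ ‖z‖ ↔
          ‖T z - (((1 + ℓ) / 2 : ℝ) : ℂ)‖ ≤ (1 - ℓ) / 2))) ∧
    Set.MapsTo T {z : ℂ | ‖z‖ ≤ a}
      {w : ℂ | ‖-w - (((1 + ℓ) / 2 : ℝ) : ℂ)‖ ≤ (1 - ℓ) / 2} ∧
    Set.MapsTo T {z : ℂ | b ≤ ‖z‖}
      {w : ℂ | ‖w - (((1 + ℓ) / 2 : ℝ) : ℂ)‖ ≤ (1 - ℓ) / 2} := by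
  have hb : 0 < b := ha.trans hab
  set s := Real.sqrt a with hs_def
  set r := Real.sqrt b with hr_def
  have hs : 0 < s := Real.sqrt_pos.2 ha
  have hr : 0 < r := Real.sqrt_pos.2 hb
  have hsr : s < r := Real.sqrt_lt_sqrt ha.le hab
  have hs2 : s ^ 2 = a := Real.sq_sqrt ha.le
  have hr2 : r ^ 2 = b := Real.sq_sqrt hb.le
  set c := Real.sqrt (a * b) with hc_def
  have hc0 : 0 < c := Real.sqrt_pos.2 (by positivity)
  have hc2 : c ^ 2 = a * b := Real.sq_sqrt (by positivity)
  have hd : r + s ≠ 0 := by positivity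
  have hγ0 : 0 < γ := by rw [hγ]; exact div_pos (by linarith) (by linarith)
  have hγ1 : γ < 1 := by rw [hγ]; exact (div_lt_one (by linarith)).2 (by linarith)
  have hA : (1 - γ) ^ 2 * c ^ 2 = (1 + γ) ^ 2 * a ^ 2 := by
    rw [hγ, hc2, ← hs2, ← hr2]; field_simp; ring
  have hB : (1 + γ) ^ 2 * c ^ 2 = (1 - γ) ^ 2 * b ^ 2 := by
    rw [hγ, hc2, ← hs2, ← hr2]; field_simp; ring
  have hac : a < c := by nlinarith
  have hcb : c < b := by nlinarith
  have main : ∀ z : ℂ, z + (c : ℂ) ≠ 0 →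
      ((‖z‖ ≤ a ↔
          ‖T z + (((1 + ℓ) / 2 : ℝ) : ℂ)‖ ≤ (1 - ℓ) / 2) ∧
       (b ≤ ‖z‖ ↔
          ‖T z - (((1 + ℓ) / 2 : ℝ) : ℂ)‖ ≤ (1 - ℓ) / 2)) := by
    intro z hz'
    rw [hT, hℓ]
    simp only
    exact ⟨key_inner γ c a hγ0 hγ1 hc0 ha.le hA z hz',
      key_outer γ c b hγ0 hγ1 hc0 hb.le hB z hz'⟩
  refine ⟨fun z hz => main z (fun h => hz (by linear_combination h)), ?_, ?_⟩
  · intro z hz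
    have hz' : z + (c : ℂ) ≠ 0 := by
      intro h
      have hzc : z = -(c : ℂ) := by linear_combination h
      rw [hzc] at hz
      simp only [Set.mem_setOf_eq, norm_neg, Complex.norm_real, Real.norm_eq_abs,
        abs_of_pos hc0] at hz
      linarith
    have h1 := ((main z hz').1).mp hz
    have h2 : -T z - (((1 + ℓ) / 2 : ℝ) : ℂ) = -(T z + (((1 + ℓ) / 2 : ℝ) : ℂ)) := by ring
    show ‖-T z - (((1 + ℓ) / 2 : ℝ) : ℂ)‖ ≤ (1 - ℓ) / 2
    rw [h2, norm_neg]
    exact h1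
  · intro z hz
    have hz' : z + (c : ℂ) ≠ 0 := by
      intro h
      have hzc : z = -(c : ℂ) := by linear_combination h
      rw [hzc] at hz
      simp only [Set.mem_setOf_eq, norm_neg, Complex.norm_real, Real.norm_eq_abs,
        abs_of_pos hc0] at hz
      linarith
    exact ((main z hz').2).mp hz
end

section
/- Let 0 < a < b and let k be a positive integer. The trapezoidal-quadrature rational function R(z) = 1/(1 + (z/a)^k) achieves the separation ratio sup_{z ∈ O} |R(z)| / inf_{z ∈ I} |R(z)| = 2/((b/a)^k − 1), where I = {z ∈ ℂ : |z| ≤ a} and O = {z ∈ ℂ : |z| ≥ b}. -/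
/-- For `0 < a < b` and positive integer `k`, the trapezoidal-quadrature
rational function `R(z) = 1/(1 + (z/a)^k)` achieves separation ratio
`sup_{z∈O}|R| / inf_{z∈I}|R| = 2/((b/a)^k − 1)` between `O = {|z| ≥ b}` and
`I = {|z| ≤ a}` (absolute values interpreted in `[0,∞]`). -/
theorem trapezoidal_separation_ratio (a b : ℝ) (ha : 0 < a) (hab : a < b)
    (k : ℕ) (hk : 0 < k) :
    (⨆ z ∈ {z : ℂ | b ≤ ‖z‖},
        (1 : ENNReal) / (‖1 + (z / ((a : ℝ) : ℂ)) ^ k‖₊ : ENNReal)) /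
      (⨅ z ∈ {z : ℂ | ‖z‖ ≤ a},
        (1 : ENNReal) / (‖1 + (z / ((a : ℝ) : ℂ)) ^ k‖₊ : ENNReal))
      = ENNReal.ofReal (2 / ((b / a) ^ k - 1)) := by
  have hb : (0:ℝ) < b := ha.trans hab
  have hba : 1 < b / a := (one_lt_div ha).2 hab
  set c : ℝ := (b / a) ^ k - 1 with hc_def
  have hc : 0 < c := sub_pos.2 (one_lt_pow₀ hba hk.ne')
  have hk0 : (k:ℂ) ≠ 0 := Nat.cast_ne_zero.2 hk.ne'
  have hterm : ∀ z : ℂ, (1 : ENNReal) / (‖1 + (z / ((a : ℝ) : ℂ)) ^ k‖₊ : ENNReal)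
      = (ENNReal.ofReal ‖1 + (z / ((a : ℝ) : ℂ)) ^ k‖)⁻¹ := by
    intro z
    rw [one_div, ← ENNReal.ofReal_coe_nnreal, coe_nnnorm]
  have hsup : (⨆ z ∈ {z : ℂ | b ≤ ‖z‖},
      (1 : ENNReal) / (‖1 + (z / ((a : ℝ) : ℂ)) ^ k‖₊ : ENNReal))
      = ENNReal.ofReal c⁻¹ := by
    rw [ENNReal.ofReal_inv_of_pos hc]
    apply le_antisymm
    · refine iSup₂_le fun z hz => ?_
      rw [hterm]
      refine ENNReal.inv_le_inv.2 (ENNReal.ofReal_le_ofReal ?_)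
      have habs : (b/a)^k ≤ ‖(z / ((a : ℝ) : ℂ)) ^ k‖ := by
        rw [norm_pow, norm_div, Complex.norm_real, Real.norm_of_nonneg ha.le]
        refine pow_le_pow_left₀ (le_of_lt (div_pos hb ha)) ?_ k
        exact div_le_div_of_nonneg_right hz ha.le
      calc c ≤ ‖(z / ((a : ℝ) : ℂ)) ^ k‖ - ‖(-1 : ℂ)‖ := by
              rw [norm_neg, norm_one, hc_def]; linarith
        _ ≤ ‖(z / ((a : ℝ) : ℂ)) ^ k - (-1)‖ := norm_sub_norm_le _ _
        _ = ‖1 + (z / ((a : ℝ) : ℂ)) ^ k‖ := by ring_nf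
    · -- witness z₀ = b * exp(i π / k)
      set z₀ : ℂ := (b:ℂ) * Complex.exp ((Real.pi / k : ℝ) * Complex.I) with hz₀def
      have hz₀mem : z₀ ∈ {z : ℂ | b ≤ ‖z‖} := by
        show b ≤ ‖z₀‖
        rw [hz₀def, norm_mul, Complex.norm_real, Complex.norm_exp_ofReal_mul_I,
          Real.norm_of_nonneg hb.le, mul_one]
      have hpow : (Complex.exp ((Real.pi / k : ℝ) * Complex.I)) ^ k = -1 := by
        rw [← Complex.exp_nat_mul]
        have : (k : ℂ) * ((Real.pi / k : ℝ) * Complex.I) = (Real.pi : ℂ) * Complex.I := by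
          push_cast
          field_simp
        rw [this, Complex.exp_pi_mul_I]
      have hval : (1 : ℂ) + (z₀ / ((a : ℝ) : ℂ)) ^ k = ((1 - (b/a)^k : ℝ) : ℂ) := by
        have hre : (z₀ / ((a : ℝ) : ℂ)) ^ k
            = (((b/a : ℝ)) : ℂ) ^ k * (Complex.exp ((Real.pi / k : ℝ) * Complex.I)) ^ k := by
          rw [hz₀def]
          push_cast
          have hane : ((a:ℂ)) ≠ 0 := by exact_mod_cast ha.ne'
          field_simp
          ring
        rw [hre, hpow]
        push_cast
        ring
      have hnorm : ‖(1 : ℂ) + (z₀ / ((a : ℝ) : ℂ)) ^ k‖ = c := by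
        rw [hval, Complex.norm_real, Real.norm_eq_abs, abs_of_nonpos ?_, hc_def]
        · ring
        · have : 1 < (b/a)^k := one_lt_pow₀ hba hk.ne'
          linarith
      have := le_iSup₂ (f := fun z (_ : z ∈ {z : ℂ | b ≤ ‖z‖}) =>
        (1 : ENNReal) / (‖1 + (z / ((a : ℝ) : ℂ)) ^ k‖₊ : ENNReal)) z₀ hz₀mem
      rw [hterm, hnorm] at this
      exact this
  have hinf : (⨅ z ∈ {z : ℂ | ‖z‖ ≤ a},
      (1 : ENNReal) / (‖1 + (z / ((a : ℝ) : ℂ)) ^ k‖₊ : ENNReal))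
      = ENNReal.ofReal (2 : ℝ)⁻¹ := by
    rw [ENNReal.ofReal_inv_of_pos two_pos]
    apply le_antisymm
    · have hamem : ((a:ℝ):ℂ) ∈ {z : ℂ | ‖z‖ ≤ a} := by
        simp [Complex.norm_real, abs_of_pos ha]
      have hval : (1 : ℂ) + (((a:ℝ):ℂ) / ((a : ℝ) : ℂ)) ^ k = 2 := by
        rw [div_self (by exact_mod_cast ha.ne'), one_pow]
        norm_num
      have := iInf₂_le (f := fun z (_ : z ∈ {z : ℂ | ‖z‖ ≤ a}) =>
        (1 : ENNReal) / (‖1 + (z / ((a : ℝ) : ℂ)) ^ k‖₊ : ENNReal)) ((a:ℝ):ℂ) hamem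
      rw [hterm, hval] at this
      simpa using this
    · refine le_iInf₂ fun z hz => ?_
      rw [hterm]
      refine ENNReal.inv_le_inv.2 (ENNReal.ofReal_le_ofReal ?_)
      have h1 : ‖(z / ((a : ℝ) : ℂ)) ^ k‖ ≤ 1 := by
        rw [norm_pow, norm_div, Complex.norm_real, Real.norm_of_nonneg ha.le]
        refine pow_le_one₀ (by positivity) ?_
        rw [div_le_one ha]
        exact hz
      calc ‖(1 : ℂ) + (z / ((a : ℝ) : ℂ)) ^ k‖ ≤ ‖(1:ℂ)‖ + ‖(z / ((a : ℝ) : ℂ)) ^ k‖ :=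
            norm_add_le _ _
        _ ≤ 2 := by rw [norm_one]; linarith
  rw [hsup, hinf, ← ENNReal.ofReal_div_of_pos (by norm_num : (0:ℝ) < (2:ℝ)⁻¹)]
  congr 1
  field_simp
end

section
/- Let k₁, k₂ be positive integers, c ∈ ℂ, r > 0, and set k = k₁·k₂. Let T(w) = (1 − w)/w. Then for every z ∈ ℂ with ((z − c)/r)^{k₁} ≠ −1 and ((z − c)/r)^{k} ≠ −1, the composite rule R_{c,r,k}(z) = R_{0,1,k₂}(T(R_{c,r,k₁}(z))) holds; explicitly, 1/(1 + ((z−c)/r)^{k₁k₂}) = 1/(1 + (T(1/(1 + ((z−c)/r)^{k₁})))^{k₂}). -/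
/-- Composite rule: for positive integers `k₁, k₂`, `k = k₁k₂`,
center `c`, radius `r > 0`, and `T(w) = (1 − w)/w`, for every `z` with
`((z−c)/r)^{k₁} ≠ −1` and `((z−c)/r)^{k} ≠ −1`,
`R_{c,r,k}(z) = R_{0,1,k₂}(T(R_{c,r,k₁}(z)))`, i.e.
`1/(1 + ((z−c)/r)^{k₁k₂}) = 1/(1 + (T(1/(1 + ((z−c)/r)^{k₁})))^{k₂})`. -/
theorem composite_rule (k₁ k₂ : ℕ) (hk₁ : 0 < k₁) (hk₂ : 0 < k₂)
    (c : ℂ) (r : ℝ) (hr : 0 < r) (z : ℂ)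
    (h1 : ((z - c) / (r : ℂ)) ^ k₁ ≠ -1)
    (h2 : ((z - c) / (r : ℂ)) ^ (k₁ * k₂) ≠ -1) :
    1 / (1 + ((z - c) / (r : ℂ)) ^ (k₁ * k₂)) =
      1 / (1 + ((1 - 1 / (1 + ((z - c) / (r : ℂ)) ^ k₁)) /
        (1 / (1 + ((z - c) / (r : ℂ)) ^ k₁))) ^ k₂) := by
  set w := ((z - c) / (r : ℂ)) ^ k₁ with hw
  have hne : 1 + w ≠ 0 := fun h => h1 (by linear_combination h)
  have key : (1 - 1 / (1 + w)) / (1 / (1 + w)) = w := by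
    field_simp
    ring
  rw [key, pow_mul]
end

section
/- Let k₁ be a positive integer, k₂ an even positive integer, c ∈ ℂ, r > 0, and k = k₁·k₂. Let p = c + r·σ be any pole of R_{c,r,k}, i.e. σ ∈ ℂ with σ^k = −1. Then σ^{k₁} is a root of x^{k₂} = −1, σ^{k₁} ≠ −1, and R_{c,r,k₁}(p) = 1/(1 + σ^{k₁}); that is, the inner rational function maps every pole of R_{c,r,k} to one of the shifts s_j^{(k₂)} = 1/(1 + σ_j^{(k₂)}) of the outer rational function. -/
/-- For positive integers `k₁` and even `k₂`, `k = k₁k₂`, `c ∈ ℂ`,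
`r > 0`, and any pole `p = c + rσ` of `R_{c,r,k}` (i.e. `σ^k = −1`): `σ^{k₁}` is a
root of `x^{k₂} = −1`, `σ^{k₁} ≠ −1`, and the inner rational function satisfies
`R_{c,r,k₁}(p) = 1/(1 + σ^{k₁})`, one of the outer shifts `s_j = 1/(1 + σ_j)`. -/
theorem inner_filter_maps_poles_to_shifts (k₁ k₂ : ℕ) (hk₁ : 0 < k₁) (hk₂ : 0 < k₂)
    (hk₂even : Even k₂) (c : ℂ) (r : ℝ) (hr : 0 < r)
    (σ : ℂ) (hσ : σ ^ (k₁ * k₂) = -1) :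
    (σ ^ k₁) ^ k₂ = -1 ∧ σ ^ k₁ ≠ -1 ∧
    1 / (1 + (((c + (r : ℂ) * σ) - c) / (r : ℂ)) ^ k₁) = 1 / (1 + σ ^ k₁) := by
  have h1 : (σ ^ k₁) ^ k₂ = -1 := by rw [← pow_mul]; exact hσ
  have hrne : (r : ℂ) ≠ 0 := by exact_mod_cast hr.ne'
  refine ⟨h1, ?_, ?_⟩
  · intro h
    rw [h, hk₂even.neg_one_pow] at h1
    norm_num at h1
  · congr 1
    rw [add_sub_cancel_left, mul_div_cancel_left₀ _ hrne]
end
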